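/- arXiv:2303.15802 — 3 statements merged into one kernel-verified Lean document; each statement's English description precedes it below -/
import Mathlib

section
/- The complete lattice tors A is upper semimodular if and only if every brick in mod A is isomorphic to a simple A-module. -/
/-! Preamble: the category `mod A` of finite-dimensional right `A`-modules,
torsion(-free) classes, the complete lattice `tors A`, functorially finite
torsion classes, bricks, etc. -/

open Function

/-- A bundled finite-dimensional (i.e. finitely generated) right `A`-module,
realized as a left module over `Aᵐᵒᵖ`. -/
structure ModA (A : Type) [Ring A] : Type 1 where
  carrier : Type
  [isAddCommGroup : AddCommGroup carrier]
  [isModule : Module Aᵐᵒᵖ carrier]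
  [isFinite : Module.Finite Aᵐᵒᵖ carrier]

attribute [instance] ModA.isAddCommGroup ModA.isModule ModA.isFinite

namespace ModA

variable {A : Type} [Ring A]

instance : CoeSort (ModA A) Type := ⟨ModA.carrier⟩

end ModA

section TorsionTheory

variable {A : Type} [Ring A]

/-- A torsion class: a class of finite-dimensional right `A`-modules containing the
zero modules, closed under quotient modules and under extensions. -/
def IsTorsionClass (T : Set (ModA A)) : Prop :=
  (∀ N : ModA A, Subsingleton N.carrier → N ∈ T) ∧
  (∀ M N : ModA A, M ∈ T → ∀ f : M.carrier →ₗ[Aᵐᵒᵖ] N.carrier, Surjective f → N ∈ T) ∧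
  (∀ (X Y Z : ModA A) (f : X.carrier →ₗ[Aᵐᵒᵖ] Y.carrier) (g : Y.carrier →ₗ[Aᵐᵒᵖ] Z.carrier),
    Injective f → Surjective g → LinearMap.range f = LinearMap.ker g →
    X ∈ T → Z ∈ T → Y ∈ T)

/-- A torsion-free class: a class of finite-dimensional right `A`-modules containing the
zero modules, closed under submodules and under extensions. -/
def IsTorsionFreeClass (F : Set (ModA A)) : Prop :=
  (∀ N : ModA A, Subsingleton N.carrier → N ∈ F) ∧
  (∀ M N : ModA A, M ∈ F → ∀ f : N.carrier →ₗ[Aᵐᵒᵖ] M.carrier, Injective f → N ∈ F) ∧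
  (∀ (X Y Z : ModA A) (f : X.carrier →ₗ[Aᵐᵒᵖ] Y.carrier) (g : Y.carrier →ₗ[Aᵐᵒᵖ] Z.carrier),
    Injective f → Surjective g → LinearMap.range f = LinearMap.ker g →
    X ∈ F → Z ∈ F → Y ∈ F)

theorem isTorsionClass_sInter {S : Set (Set (ModA A))} (h : ∀ T ∈ S, IsTorsionClass T) :
    IsTorsionClass (⋂₀ S) := by
  refine ⟨fun N hN => ?_, fun M N hM f hf => ?_, fun X Y Z f g hf hg he hX hZ => ?_⟩
  · exact Set.mem_sInter.2 fun T hT => (h T hT).1 N hN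
  · exact Set.mem_sInter.2 fun T hT => (h T hT).2.1 M N (Set.mem_sInter.1 hM T hT) f hf
  · exact Set.mem_sInter.2 fun T hT =>
      (h T hT).2.2 X Y Z f g hf hg he (Set.mem_sInter.1 hX T hT) (Set.mem_sInter.1 hZ T hT)

theorem isTorsionFreeClass_sInter {S : Set (Set (ModA A))} (h : ∀ F ∈ S, IsTorsionFreeClass F) :
    IsTorsionFreeClass (⋂₀ S) := by
  refine ⟨fun N hN => ?_, fun M N hM f hf => ?_, fun X Y Z f g hf hg he hX hZ => ?_⟩
  · exact Set.mem_sInter.2 fun T hT => (h T hT).1 N hN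
  · exact Set.mem_sInter.2 fun T hT => (h T hT).2.1 M N (Set.mem_sInter.1 hM T hT) f hf
  · exact Set.mem_sInter.2 fun T hT =>
      (h T hT).2.2 X Y Z f g hf hg he (Set.mem_sInter.1 hX T hT) (Set.mem_sInter.1 hZ T hT)

end TorsionTheory

/-- `tors A`: the poset of all torsion classes in `mod A`, ordered by inclusion. -/
def Tors (A : Type) [Ring A] : Type 1 := {T : Set (ModA A) // IsTorsionClass T}

/-- `torf A`: the poset of all torsion-free classes in `mod A`, ordered by inclusion. -/
def Torf (A : Type) [Ring A] : Type 1 := {F : Set (ModA A) // IsTorsionFreeClass F}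

namespace Tors

variable {A : Type} [Ring A]

instance : PartialOrder (Tors A) := Subtype.partialOrder _

instance : InfSet (Tors A) :=
  ⟨fun S => ⟨⋂₀ (Subtype.val '' S),
    isTorsionClass_sInter (by rintro _ ⟨T, _, rfl⟩; exact T.2)⟩⟩

/-- `tors A` is a complete lattice, with meets given by intersections. -/
instance : CompleteLattice (Tors A) :=
  completeLatticeOfInf _ (fun S =>
    ⟨fun T hT => Set.sInter_subset_of_mem ⟨T, hT, rfl⟩,
     fun L hL => Set.subset_sInter (by rintro _ ⟨T, hT, rfl⟩; exact hL hT)⟩)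

end Tors

namespace Torf

variable {A : Type} [Ring A]

instance : PartialOrder (Torf A) := Subtype.partialOrder _

instance : InfSet (Torf A) :=
  ⟨fun S => ⟨⋂₀ (Subtype.val '' S),
    isTorsionFreeClass_sInter (by rintro _ ⟨T, _, rfl⟩; exact T.2)⟩⟩

/-- `torf A` is a complete lattice, with meets given by intersections. -/
instance : CompleteLattice (Torf A) :=
  completeLatticeOfInf _ (fun S =>
    ⟨fun T hT => Set.sInter_subset_of_mem ⟨T, hT, rfl⟩,
     fun L hL => Set.subset_sInter (by rintro _ ⟨T, hT, rfl⟩; exact hL hT)⟩)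

end Torf

section Defs

variable {A : Type} [Ring A]

/-- `T(C)`: the smallest torsion class containing the class `C` of modules. -/
def torsGen (C : Set (ModA A)) : Tors A := sInf {T : Tors A | C ⊆ T.1}

/-- `Fac M`: the class of all quotients of finite direct sums of copies of `M`. -/
def Fac (M : ModA A) : Set (ModA A) :=
  {N | ∃ (k : ℕ) (f : (Fin k → M.carrier) →ₗ[Aᵐᵒᵖ] N.carrier), Surjective f}

/-- A class of modules is functorially finite (as a torsion class) when it is
of the form `Fac M`. -/
def IsFFSet (X : Set (ModA A)) : Prop := ∃ M : ModA A, X = Fac M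

/-- A torsion class is functorially finite when it is of the form `Fac M`. -/
def IsFunctoriallyFinite (T : Tors A) : Prop := IsFFSet T.1

/-- The right Hom-orthogonal class `X^⊥`. -/
def rightPerp (X : Set (ModA A)) : Set (ModA A) :=
  {M | ∀ N ∈ X, ∀ f : N.carrier →ₗ[Aᵐᵒᵖ] M.carrier, f = 0}

/-- The left Hom-orthogonal class `^⊥X`. -/
def leftPerp (X : Set (ModA A)) : Set (ModA A) :=
  {N | ∀ M ∈ X, ∀ f : N.carrier →ₗ[Aᵐᵒᵖ] M.carrier, f = 0}

/-- A brick: a nonzero module all of whose nonzero endomorphisms are isomorphisms. -/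
def IsBrick (B : ModA A) : Prop :=
  Nontrivial B.carrier ∧
    ∀ f : B.carrier →ₗ[Aᵐᵒᵖ] B.carrier, f ≠ 0 → Bijective f

end Defs

/-- `f-tors A`: the poset of functorially finite torsion classes, ordered by inclusion. -/
def FTors (A : Type) [Ring A] : Type 1 := {T : Tors A // IsFunctoriallyFinite T}

instance {A : Type} [Ring A] : PartialOrder (FTors A) := Subtype.partialOrder _

section Simples

variable (A : Type) [Ring A]

/-- The type of simple objects of `mod A`. -/
def SimpleMod : Type 1 := {S : ModA A // IsSimpleModule Aᵐᵒᵖ S.carrier}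

/-- Isomorphism of simple modules, as an equivalence relation. -/
def simpleIsoSetoid : Setoid (SimpleMod A) where
  r S T := Nonempty (S.1.carrier ≃ₗ[Aᵐᵒᵖ] T.1.carrier)
  iseqv := ⟨fun _ => ⟨LinearEquiv.refl _ _⟩, fun ⟨e⟩ => ⟨e.symm⟩, fun ⟨e⟩ ⟨f⟩ => ⟨e.trans f⟩⟩

/-- The number of isomorphism classes of simple right `A`-modules. -/
noncomputable def numSimples : ℕ := Nat.card (Quotient (simpleIsoSetoid A))

end Simples

section Lattice

/-- Upper semimodularity: if `a` and `b` both cover `a ⊓ b`, then `a ⊔ b` covers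
both `a` and `b`. -/
def UpperSemimodular (α : Type*) [Lattice α] : Prop :=
  ∀ a b : α, a ⊓ b ⋖ a → a ⊓ b ⋖ b → a ⋖ a ⊔ b ∧ b ⋖ a ⊔ b

/-- Lower semimodularity: if `a ⊔ b` covers both `a` and `b`, then `a` and `b` both
cover `a ⊓ b`. -/
def LowerSemimodular (α : Type*) [Lattice α] : Prop :=
  ∀ a b : α, a ⋖ a ⊔ b → b ⋖ a ⊔ b → a ⊓ b ⋖ a ∧ a ⊓ b ⋖ b

/-- An element `x` of a complete lattice is completely join irreducible if the join of
all elements strictly below `x` is strictly below `x`. -/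
def CompletelyJoinIrred {α : Type*} [CompleteLattice α] (x : α) : Prop :=
  sSup {y | y < x} < x

end Lattice

/-- The statement that the poset `f-tors A` forms a lattice: any two functorially finite
torsion classes have a least upper bound and a greatest lower bound within `f-tors A`. -/
def FTorsIsLattice (A : Type) [Ring A] : Prop :=
  ∀ a b : FTors A, (∃ m, IsGLB {a, b} m) ∧ (∃ j, IsLUB {a, b} j)

/-- Upper semimodularity for the poset `f-tors A`. -/
def FTorsUpperSemimodular (A : Type) [Ring A] : Prop :=
  ∀ a b m j : FTors A, IsGLB {a, b} m → IsLUB {a, b} j →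
    m ⋖ a → m ⋖ b → a ⋖ j ∧ b ⋖ j

/-- Lower semimodularity for the poset `f-tors A`. -/
def FTorsLowerSemimodular (A : Type) [Ring A] : Prop :=
  ∀ a b m j : FTors A, IsGLB {a, b} m → IsLUB {a, b} j →
    a ⋖ j → b ⋖ j → m ⋖ a ∧ m ⋖ b

/-- A realization of a `K`-algebra `A` as a finite product of finite-dimensional
local `K`-algebras. -/
structure LocalAlgebraFactorization (K : Type) [Field K] (A : Type) [Ring A] [Algebra K A] where
  m : ℕ
  B : Fin m → Type
  [ringB : ∀ i, Ring (B i)]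
  [algB : ∀ i, Algebra K (B i)]
  finB : ∀ i, FiniteDimensional K (B i)
  localB : ∀ i, IsLocalRing (B i)
  equiv : A ≃ₐ[K] ∀ i, B i

/-- An indecomposable module: nonzero, and not the internal direct sum of two nonzero
submodules. -/
def IsIndecomposableModule (R M : Type*) [Ring R] [AddCommGroup M] [Module R M] : Prop :=
  Nontrivial M ∧ ∀ S T : Submodule R M, IsCompl S T → S = ⊥ ∨ T = ⊥

namespace Stmt4Proof

open Function LinearMap Submodule

set_option linter.unusedSectionVars false

variable {A : Type} [Ring A]

section Basic
variable [IsNoetherianRing Aᵐᵒᵖ] [IsArtinianRing Aᵐᵒᵖ]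

instance modA_noeth (M : ModA A) : IsNoetherian Aᵐᵒᵖ M.carrier :=
  isNoetherian_of_isNoetherianRing_of_finite _ _

instance modA_art (M : ModA A) : IsArtinian Aᵐᵒᵖ M.carrier :=
  isArtinian_of_fg_of_artinian'

instance sub_finite {Mc : Type} [AddCommGroup Mc] [Module Aᵐᵒᵖ Mc]
    [IsNoetherian Aᵐᵒᵖ Mc] (p : Submodule Aᵐᵒᵖ Mc) : Module.Finite Aᵐᵒᵖ ↥p :=
  Module.Finite.iff_fg.mpr (IsNoetherian.noetherian p)

instance submod_coatomic {Mc : Type} [AddCommGroup Mc] [Module Aᵐᵒᵖ Mc]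
    [IsNoetherian Aᵐᵒᵖ Mc] : IsCoatomic (Submodule Aᵐᵒᵖ Mc) :=
  isCoatomic_of_orderTop_gt_wellFounded (isNoetherian_iff.mp inferInstance)

end Basic

/-- Bundle a finite module as an object of `ModA A`. -/
def bund (Mc : Type) [AddCommGroup Mc] [Module Aᵐᵒᵖ Mc] [Module.Finite Aᵐᵒᵖ Mc] :
    ModA A := ⟨Mc⟩

@[simp] lemma bund_carrier (Mc : Type) [AddCommGroup Mc] [Module Aᵐᵒᵖ Mc]
    [Module.Finite Aᵐᵒᵖ Mc] : (bund (A := A) Mc).carrier = Mc := rfl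

/- Torsion class helpers -/
lemma Tors.zero_mem (T : Tors A) (M : ModA A) (h : Subsingleton M.carrier) : M ∈ T.1 :=
  T.2.1 M h

lemma Tors.mem_of_surj (T : Tors A) {M N : ModA A} (hM : M ∈ T.1)
    (f : M.carrier →ₗ[Aᵐᵒᵖ] N.carrier) (hf : Surjective f) : N ∈ T.1 :=
  T.2.2.1 M N hM f hf

lemma Tors.mem_of_equiv (T : Tors A) {M N : ModA A} (hM : M ∈ T.1)
    (e : M.carrier ≃ₗ[Aᵐᵒᵖ] N.carrier) : N ∈ T.1 :=
  Tors.mem_of_surj T hM e.toLinearMap e.surjective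

lemma Tors.mem_ext (T : Tors A) {X Y Z : ModA A}
    (f : X.carrier →ₗ[Aᵐᵒᵖ] Y.carrier) (g : Y.carrier →ₗ[Aᵐᵒᵖ] Z.carrier)
    (hf : Injective f) (hg : Surjective g) (he : LinearMap.range f = LinearMap.ker g)
    (hX : X ∈ T.1) (hZ : Z ∈ T.1) : Y ∈ T.1 :=
  T.2.2.2 X Y Z f g hf hg he hX hZ

lemma Tors.le_def {x y : Tors A} : x ≤ y ↔ x.1 ⊆ y.1 := Iff.rfl

lemma Tors.mem_sInf {S : Set (Tors A)} {M : ModA A} :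
    M ∈ (sInf S).1 ↔ ∀ T ∈ S, M ∈ T.1 := by
  show M ∈ ⋂₀ (Subtype.val '' S) ↔ _
  exact ⟨fun h T hT => Set.mem_sInter.1 h T.1 ⟨T, hT, rfl⟩,
    fun h => Set.mem_sInter.2 (by rintro _ ⟨T, hT, rfl⟩; exact h T hT)⟩

lemma Tors.mem_inf {x y : Tors A} {M : ModA A} :
    M ∈ (x ⊓ y).1 ↔ M ∈ x.1 ∧ M ∈ y.1 := by
  show M ∈ (sInf {x, y}).1 ↔ _
  rw [Tors.mem_sInf]
  simp

lemma torsGen_mem {C : Set (ModA A)} {M : ModA A} (h : M ∈ C) : M ∈ (torsGen C).1 :=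
  Tors.mem_sInf.mpr fun _ hT => hT h

lemma torsGen_le {C : Set (ModA A)} {T : Tors A} (h : C ⊆ T.1) : torsGen C ≤ T :=
  sInf_le h

/- factoring through a surjection -/
theorem exists_factor {M₁ M₂ M₃ : Type*} [AddCommGroup M₁] [Module Aᵐᵒᵖ M₁]
    [AddCommGroup M₂] [Module Aᵐᵒᵖ M₂] [AddCommGroup M₃] [Module Aᵐᵒᵖ M₃]
    (e : M₁ →ₗ[Aᵐᵒᵖ] M₂) (he : Surjective e) (u : M₁ →ₗ[Aᵐᵒᵖ] M₃)
    (hk : LinearMap.ker e ≤ LinearMap.ker u) :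
    ∃ v : M₂ →ₗ[Aᵐᵒᵖ] M₃, v.comp e = u := by
  let q := e.quotKerEquivOfSurjective he
  refine ⟨((LinearMap.ker e).liftQ u hk).comp q.symm.toLinearMap, ?_⟩
  ext x
  have h1 : q ((LinearMap.ker e).mkQ x) = e x := by
    simp [q, LinearMap.quotKerEquivOfSurjective, LinearEquiv.trans_apply]
  have h2 : q.symm (e x) = (LinearMap.ker e).mkQ x := by
    rw [← h1, LinearEquiv.symm_apply_apply]
  simp [h2]

theorem section_of_retraction {X Y Z : Type*} [AddCommGroup X] [Module Aᵐᵒᵖ X]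
    [AddCommGroup Y] [Module Aᵐᵒᵖ Y] [AddCommGroup Z] [Module Aᵐᵒᵖ Z]
    (f : X →ₗ[Aᵐᵒᵖ] Y) (g : Y →ₗ[Aᵐᵒᵖ] Z) (hg : Surjective g)
    (he : LinearMap.range f = LinearMap.ker g)
    (π : Y →ₗ[Aᵐᵒᵖ] X) (hπ : π.comp f = LinearMap.id) :
    ∃ s : Z →ₗ[Aᵐᵒᵖ] Y, g.comp s = LinearMap.id := by
  have hπf : ∀ x, π (f x) = x := fun x => congrArg (fun h => h x) hπ
  have hgf : ∀ x, g (f x) = 0 := by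
    intro x
    have : f x ∈ LinearMap.ker g := he ▸ LinearMap.mem_range_self f x
    simpa using this
  let gC : ↥(LinearMap.ker π) →ₗ[Aᵐᵒᵖ] Z := g.comp (LinearMap.ker π).subtype
  have hinj : Injective gC := by
    intro v w hvw
    have hker : ((v : Y) - w) ∈ LinearMap.ker g := by
      have h : g (v : Y) = g (w : Y) := hvw
      simp [LinearMap.mem_ker, map_sub, h]
    rw [← he] at hker
    obtain ⟨x, hx⟩ := hker
    have hπ0 : π ((v : Y) - w) = 0 := by
      rw [map_sub, LinearMap.mem_ker.mp v.2, LinearMap.mem_ker.mp w.2, sub_zero]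
    have hx0 : x = 0 := by rw [← hπf x, hx, hπ0]
    have hvw0 : (v : Y) - w = 0 := by rw [← hx, hx0, map_zero]
    exact Subtype.ext (sub_eq_zero.mp hvw0)
  have hsurj : Surjective gC := by
    intro z
    obtain ⟨y, hy⟩ := hg z
    refine ⟨⟨y - f (π y), ?_⟩, ?_⟩
    · simp [LinearMap.mem_ker, map_sub, hπf]
    · simp [gC, map_sub, hgf, hy]
  let e := LinearEquiv.ofBijective gC ⟨hinj, hsurj⟩
  refine ⟨(LinearMap.ker π).subtype.comp e.symm.toLinearMap, ?_⟩
  ext z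
  show g ((LinearMap.ker π).subtype (e.symm z)) = z
  exact e.apply_symm_apply z

end Stmt4Proof
namespace Stmt4Proof

open Function LinearMap Submodule

set_option linter.unusedSectionVars false

variable {A : Type} [Ring A]

lemma false_of_surj_subsingleton {Mc Nc : Type*} [AddCommGroup Mc] [Module Aᵐᵒᵖ Mc]
    [AddCommGroup Nc] [Module Aᵐᵒᵖ Nc] [Subsingleton Mc] [Nontrivial Nc]
    (f : Mc →ₗ[Aᵐᵒᵖ] Nc) (hf : Surjective f) : False := by
  obtain ⟨a, b, hab⟩ := exists_pair_ne Nc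
  obtain ⟨x, hx⟩ := hf a
  obtain ⟨y, hy⟩ := hf b
  exact hab (by rw [← hx, ← hy, Subsingleton.elim x y])

/-- `S` is (isomorphic to) a quotient of a submodule of `Mc`. -/
def IsSQ (S : ModA A) (Mc : Type) [AddCommGroup Mc] [Module Aᵐᵒᵖ Mc] : Prop :=
  ∃ (N : Submodule Aᵐᵒᵖ Mc) (f : ↥N →ₗ[Aᵐᵒᵖ] S.carrier), Surjective f

lemma IsSQ.of_injective {S : ModA A} {Mc Nc : Type} [AddCommGroup Mc] [Module Aᵐᵒᵖ Mc]
    [AddCommGroup Nc] [Module Aᵐᵒᵖ Nc] (j : Mc →ₗ[Aᵐᵒᵖ] Nc) (hj : Injective j)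
    (h : IsSQ S Mc) : IsSQ S Nc := by
  obtain ⟨N, f, hf⟩ := h
  exact ⟨N.map j, f.comp (Submodule.equivMapOfInjective j hj N).symm.toLinearMap,
    hf.comp (Submodule.equivMapOfInjective j hj N).symm.surjective⟩

lemma IsSQ.of_surjective {S : ModA A} {Mc Nc : Type} [AddCommGroup Mc] [Module Aᵐᵒᵖ Mc]
    [AddCommGroup Nc] [Module Aᵐᵒᵖ Nc] (j : Mc →ₗ[Aᵐᵒᵖ] Nc) (hj : Surjective j)
    (h : IsSQ S Nc) : IsSQ S Mc := by
  obtain ⟨N', f, hf⟩ := h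
  have hres : ∀ x ∈ N'.comap j, j x ∈ N' := fun x hx => hx
  have hrs : Surjective (j.restrict hres) := by
    intro y
    obtain ⟨x, hx⟩ := hj y.1
    refine ⟨⟨x, ?_⟩, ?_⟩
    · show j x ∈ N'
      rw [hx]; exact y.2
    · exact Subtype.ext hx
  exact ⟨N'.comap j, f.comp (j.restrict hres), hf.comp hrs⟩

lemma IsSQ.of_quot {S : ModA A} {Mc : Type} [AddCommGroup Mc] [Module Aᵐᵒᵖ Mc]
    (f : Mc →ₗ[Aᵐᵒᵖ] S.carrier) (hf : Surjective f) : IsSQ S Mc :=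
  ⟨⊤, f.comp (⊤ : Submodule Aᵐᵒᵖ Mc).subtype,
    hf.comp (fun x => ⟨⟨x, trivial⟩, rfl⟩)⟩

lemma IsSQ.self (S : ModA A) : IsSQ S S.carrier :=
  IsSQ.of_quot LinearMap.id surjective_id

lemma sq_of_simple {Mc : Type} [AddCommGroup Mc] [Module Aᵐᵒᵖ Mc]
    (hMc : IsSimpleModule Aᵐᵒᵖ Mc) {S' : ModA A}
    (hS' : IsSimpleModule Aᵐᵒᵖ S'.carrier) (h : IsSQ S' Mc) :
    Nonempty (S'.carrier ≃ₗ[Aᵐᵒᵖ] Mc) := by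
  obtain ⟨N, f, hf⟩ := h
  haveI := hMc; haveI := hS'
  haveI : Nontrivial S'.carrier := IsSimpleModule.nontrivial Aᵐᵒᵖ S'.carrier
  rcases eq_bot_or_eq_top N with rfl | rfl
  · exact (false_of_surj_subsingleton f hf).elim
  · let g : Mc →ₗ[Aᵐᵒᵖ] S'.carrier :=
      f.comp (Submodule.topEquiv (R := Aᵐᵒᵖ) (M := Mc)).symm.toLinearMap
    have hgs : Surjective g := hf.comp (LinearEquiv.surjective _)
    rcases eq_bot_or_eq_top (LinearMap.ker g) with hk | hk
    · exact ⟨(LinearEquiv.ofBijective g ⟨LinearMap.ker_eq_bot.mp hk, hgs⟩).symm⟩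
    · exfalso
      have hg0 : g = 0 := LinearMap.ker_eq_top.mp hk
      obtain ⟨a, b, hab⟩ := exists_pair_ne S'.carrier
      obtain ⟨x, hx⟩ := hgs a
      obtain ⟨y, hy⟩ := hgs b
      rw [hg0] at hx hy
      exact hab (by rw [← hx, ← hy]; simp)

/-- The set of iso-classes of simple modules. -/
abbrev Qt (A : Type) [Ring A] := Quotient (simpleIsoSetoid A)

def cls (S : SimpleMod A) : Qt A := Quotient.mk (simpleIsoSetoid A) S

lemma cls_eq_iff {S S' : SimpleMod A} :
    cls S = cls S' ↔ Nonempty (S.1.carrier ≃ₗ[Aᵐᵒᵖ] S'.1.carrier) :=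
  ⟨fun h => Quotient.exact h, fun h => Quotient.sound h⟩

def PhiT (T : Tors A) : Set (Qt A) := {q | ∃ S : SimpleMod A, cls S = q ∧ S.1 ∈ T.1}

def PsiSet (σ : Set (Qt A)) : Set (ModA A) :=
  {M | ∀ S : SimpleMod A, IsSQ S.1 M.carrier → cls S ∈ σ}

theorem isTorsionClass_psiSet (σ : Set (Qt A)) : IsTorsionClass (PsiSet σ) := by
  refine ⟨?_, ?_, ?_⟩
  · intro N hN S hS
    exfalso
    obtain ⟨N₀, f, hf⟩ := hS
    haveI := hN
    haveI := S.2
    haveI : Nontrivial S.1.carrier := IsSimpleModule.nontrivial Aᵐᵒᵖ S.1.carrier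
    exact false_of_surj_subsingleton f hf
  · intro M N hM f hf S hS
    exact hM S (hS.of_surjective f hf)
  · intro X Y Z f g hfi hgs he hX hZ S hS
    obtain ⟨N, u, hu⟩ := hS
    haveI := S.2
    -- P = image under u of the part of N coming from X
    rcases eq_bot_or_eq_top (Submodule.map u ((LinearMap.range f).comap N.subtype))
      with hP | hP
    · -- that part is killed by u : factor through Z
      have hker : ∀ x : ↥N, (x : Y.carrier) ∈ LinearMap.range f → u x = 0 := by
        intro x hx
        have : u x ∈ Submodule.map u ((LinearMap.range f).comap N.subtype) :=
          Submodule.mem_map_of_mem hx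
        rw [hP] at this
        simpa using this
      have hres : ∀ x ∈ N, g x ∈ N.map g := fun x hx => Submodule.mem_map_of_mem hx
      set e : ↥N →ₗ[Aᵐᵒᵖ] ↥(N.map g) := g.restrict hres with he'
      have hes : Surjective e := by
        intro y
        obtain ⟨x, hx, hxy⟩ := y.2
        exact ⟨⟨x, hx⟩, Subtype.ext hxy⟩
      have hkk : LinearMap.ker e ≤ LinearMap.ker u := by
        intro x hx
        have hgx : g (x : Y.carrier) = 0 := by
          have := congrArg Subtype.val (LinearMap.mem_ker.mp hx)
          simpa [e, LinearMap.restrict_apply] using this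
        have : (x : Y.carrier) ∈ LinearMap.range f := by rw [he]; simpa using hgx
        exact LinearMap.mem_ker.mpr (hker x this)
      obtain ⟨v, hv⟩ := exists_factor e hes u hkk
      have hvs : Surjective v := by
        intro s
        obtain ⟨x, hx⟩ := hu s
        exact ⟨e x, by rw [← hx, ← hv]; rfl⟩
      exact hZ S ⟨N.map g, v, hvs⟩
    · -- u restricted to the X-part is onto S : S is a subquotient of X
      have hres2 : ∀ x ∈ N.comap f, f x ∈ N := fun x hx => hx
      set r : ↥(N.comap f) →ₗ[Aᵐᵒᵖ] ↥N := f.restrict hres2 with hr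
      have hXsq : IsSQ S.1 X.carrier := by
        refine ⟨N.comap f, u.comp r, ?_⟩
        intro s
        have hs : s ∈ Submodule.map u ((LinearMap.range f).comap N.subtype) := by
          rw [hP]; trivial
        obtain ⟨x, hx, hxs⟩ := hs
        obtain ⟨w, hw⟩ := Submodule.mem_comap.mp hx
        have hwm : w ∈ N.comap f := by
          show f w ∈ N
          rw [hw]; exact x.2
        refine ⟨⟨w, hwm⟩, ?_⟩
        have hrx : r ⟨w, hwm⟩ = x :=
          Subtype.ext (by simpa [r, LinearMap.restrict_apply] using hw)
        show u (r ⟨w, hwm⟩) = s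
        rw [hrx, hxs]
      exact hX S hXsq

def PsiT (σ : Set (Qt A)) : Tors A := ⟨PsiSet σ, isTorsionClass_psiSet σ⟩

end Stmt4Proof
namespace Stmt4Proof

open Function LinearMap Submodule

set_option linter.unusedSectionVars false

variable {A : Type} [Ring A]

lemma simple_mem_psiSet {S : SimpleMod A} {σ : Set (Qt A)} (h : cls S ∈ σ) :
    S.1 ∈ PsiSet σ := by
  intro S' hS'
  have he := sq_of_simple S.2 S'.2 hS'
  rw [cls_eq_iff.mpr he]
  exact h

section Noeth
variable [IsNoetherianRing Aᵐᵒᵖ] [IsArtinianRing Aᵐᵒᵖ]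

lemma exists_coatom_ge {Mc : Type} [AddCommGroup Mc] [Module Aᵐᵒᵖ Mc]
    [IsNoetherian Aᵐᵒᵖ Mc] {N : Submodule Aᵐᵒᵖ Mc} (hN : N ≠ ⊤) :
    ∃ W, IsCoatom W ∧ N ≤ W := by
  rcases IsCoatomic.eq_top_or_exists_le_coatom N with h | h
  · exact absurd h hN
  · exact h

lemma bot_ne_top_of_nontrivial {Mc : Type} [AddCommGroup Mc] [Module Aᵐᵒᵖ Mc]
    [Nontrivial Mc] : (⊥ : Submodule Aᵐᵒᵖ Mc) ≠ ⊤ := by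
  intro h
  obtain ⟨x, hx⟩ := exists_ne (0 : Mc)
  have hx' : x ∈ (⊥ : Submodule Aᵐᵒᵖ Mc) := by rw [h]; trivial
  exact hx hx'

theorem psiT_le (σ : Set (Qt A)) (T : Tors A)
    (hσ : ∀ S : SimpleMod A, cls S ∈ σ → S.1 ∈ T.1) : PsiT σ ≤ T := by
  intro M hM
  have main : ∀ V : Submodule Aᵐᵒᵖ M.carrier,
      bund ↥V ∈ PsiSet σ → bund ↥V ∈ T.1 := by
    intro V
    refine IsArtinian.induction
      (P := fun V => bund ↥V ∈ PsiSet σ → bund ↥V ∈ T.1) (fun V IH hV => ?_) V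
    by_cases hs : Subsingleton ↥V
    · exact Tors.zero_mem T _ hs
    · haveI hnt : Nontrivial ↥V := not_subsingleton_iff_nontrivial.mp hs
      obtain ⟨W', hW', -⟩ := exists_coatom_ge (bot_ne_top_of_nontrivial (A := A) (Mc := ↥V))
      haveI hZs : IsSimpleModule Aᵐᵒᵖ (↥V ⧸ W') := isSimpleModule_iff_isCoatom.mpr hW'
      set SZ : SimpleMod A := ⟨bund (↥V ⧸ W'), hZs⟩ with hSZ
      have hZT : SZ.1 ∈ T.1 := hσ SZ (hV SZ (IsSQ.of_quot W'.mkQ W'.mkQ_surjective))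
      set W : Submodule Aᵐᵒᵖ M.carrier := W'.map V.subtype with hWdef
      have h1 : W ≤ V := Submodule.map_subtype_le V W'
      have h2 : W ≠ V := by
        intro h
        refine hW'.1 (Submodule.map_injective_of_injective
          (Submodule.injective_subtype V) ?_)
        rw [Submodule.map_subtype_top]
        exact h
      have hWV : W < V := lt_of_le_of_ne h1 h2
      have hWmem : bund ↥W ∈ PsiSet σ := fun S hS =>
        hV S (hS.of_injective (Submodule.inclusion (le_of_lt hWV))
          (Submodule.inclusion_injective _))
      have hWT := IH W hWV hWmem
      let e : ↥W' ≃ₗ[Aᵐᵒᵖ] ↥W :=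
        Submodule.equivMapOfInjective V.subtype (Submodule.injective_subtype V) W'
      let f : ↥W →ₗ[Aᵐᵒᵖ] ↥V := W'.subtype.comp e.symm.toLinearMap
      have hfi : Injective f := (Submodule.injective_subtype W').comp e.symm.injective
      have hrange : LinearMap.range f = W' := by
        rw [LinearMap.range_comp, LinearEquiv.range, Submodule.map_top,
          Submodule.range_subtype]
      exact Tors.mem_ext T (X := bund ↥W) (Y := bund ↥V) (Z := SZ.1) f W'.mkQ hfi
        W'.mkQ_surjective (by exact hrange.trans (Submodule.ker_mkQ W').symm) hWT hZT
  have hTop : bund ↥(⊤ : Submodule Aᵐᵒᵖ M.carrier) ∈ PsiSet σ := fun S hS =>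
    hM S (hS.of_injective (⊤ : Submodule Aᵐᵒᵖ M.carrier).subtype
      (Submodule.injective_subtype _))
  exact Tors.mem_of_equiv T (main ⊤ hTop) Submodule.topEquiv

end Noeth

theorem phiT_psiT (σ : Set (Qt A)) : PhiT (PsiT σ) = σ := by
  ext q
  constructor
  · rintro ⟨S, rfl, hS⟩
    exact hS S (IsSQ.self S.1)
  · intro hq
    refine ⟨Quotient.out q, Quotient.out_eq q, ?_⟩
    intro S' hS'
    have he := sq_of_simple (Quotient.out q).2 S'.2 hS'
    rw [cls_eq_iff.mpr he, show cls (Quotient.out q) = q from Quotient.out_eq q]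
    exact hq

end Stmt4Proof
namespace Stmt4Proof

open Function LinearMap Submodule

set_option linter.unusedSectionVars false

variable {A : Type} [Ring A]

lemma false_of_surj_zero {Mc Nc : Type*} [AddCommGroup Mc] [Module Aᵐᵒᵖ Mc]
    [AddCommGroup Nc] [Module Aᵐᵒᵖ Nc] [Nontrivial Nc]
    {f : Mc →ₗ[Aᵐᵒᵖ] Nc} (hf : Surjective f) (h0 : f = 0) : False := by
  obtain ⟨a, b, hab⟩ := exists_pair_ne Nc
  obtain ⟨x, hx⟩ := hf a
  obtain ⟨y, hy⟩ := hf b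
  rw [h0] at hx hy
  exact hab (by rw [← hx, ← hy]; simp)

/-- Splitting condition: every extension of non-isomorphic simple modules splits
(admits a retraction). -/
def SplitCond (A : Type) [Ring A] : Prop :=
  ∀ (X Y Z : ModA A) (f : X.carrier →ₗ[Aᵐᵒᵖ] Y.carrier)
    (g : Y.carrier →ₗ[Aᵐᵒᵖ] Z.carrier),
    Injective f → Surjective g → LinearMap.range f = LinearMap.ker g →
    IsSimpleModule Aᵐᵒᵖ X.carrier → IsSimpleModule Aᵐᵒᵖ Z.carrier →
    ¬ Nonempty (X.carrier ≃ₗ[Aᵐᵒᵖ] Z.carrier) →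
    ∃ π : Y.carrier →ₗ[Aᵐᵒᵖ] X.carrier, π.comp f = LinearMap.id

section Noeth
variable [IsNoetherianRing Aᵐᵒᵖ] [IsArtinianRing Aᵐᵒᵖ]

set_option maxHeartbeats 1000000 in
/-- Under the splitting condition, a simple subquotient of `M` is a quotient of `M`. -/
theorem surj_of_sq (hsc : SplitCond A) (M : ModA A) (S : SimpleMod A)
    (h : IsSQ S.1 M.carrier) :
    ∃ φ : M.carrier →ₗ[Aᵐᵒᵖ] S.1.carrier, Surjective φ := by
  haveI := S.2
  haveI : Nontrivial S.1.carrier := IsSimpleModule.nontrivial Aᵐᵒᵖ S.1.carrier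
  obtain ⟨N₀, u₀, hu₀⟩ := h
  have main : ∀ V : Submodule Aᵐᵒᵖ M.carrier,
      ∀ N : Submodule Aᵐᵒᵖ M.carrier, N ≤ V →
      ∀ u : ↥N →ₗ[Aᵐᵒᵖ] S.1.carrier, Surjective u →
      ∃ φ : ↥V →ₗ[Aᵐᵒᵖ] S.1.carrier, Surjective φ := by
    intro V
    refine IsArtinian.induction (P := fun V => ∀ N : Submodule Aᵐᵒᵖ M.carrier, N ≤ V →
      ∀ u : ↥N →ₗ[Aᵐᵒᵖ] S.1.carrier, Surjective u →
      ∃ φ : ↥V →ₗ[Aᵐᵒᵖ] S.1.carrier, Surjective φ) (fun V IH N hNV u hu => ?_) V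
    by_cases hNeq : N = V
    · subst hNeq
      exact ⟨u, hu⟩
    · -- find a coatom of V containing N
      have hN'top : N.comap V.subtype ≠ ⊤ := by
        intro h
        refine hNeq (le_antisymm hNV ?_)
        intro x hx
        have : (⟨x, hx⟩ : ↥V) ∈ N.comap V.subtype := by rw [h]; trivial
        exact this
      obtain ⟨W', hW', hNW'⟩ := exists_coatom_ge hN'top
      set W : Submodule Aᵐᵒᵖ M.carrier := W'.map V.subtype with hWdef
      have h1 : W ≤ V := Submodule.map_subtype_le V W'
      have h2 : W ≠ V := by
        intro h
        refine hW'.1 (Submodule.map_injective_of_injective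
          (Submodule.injective_subtype V) ?_)
        rw [Submodule.map_subtype_top]
        exact h
      have hWV : W < V := lt_of_le_of_ne h1 h2
      have hNW : N ≤ W := by
        intro x hx
        exact ⟨⟨x, hNV hx⟩, hNW' hx, rfl⟩
      obtain ⟨ψ, hψ⟩ := IH W hWV N hNW u hu
      -- transport ψ to W'
      let e : ↥W' ≃ₗ[Aᵐᵒᵖ] ↥W :=
        Submodule.equivMapOfInjective V.subtype (Submodule.injective_subtype V) W'
      set ψ' : ↥W' →ₗ[Aᵐᵒᵖ] S.1.carrier := ψ.comp e.toLinearMap with hψ'def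
      have hψ's : Surjective ψ' := hψ.comp e.surjective
      set Kr : Submodule Aᵐᵒᵖ ↥V := (LinearMap.ker ψ').map W'.subtype with hKr
      set f₀ : ↥W' →ₗ[Aᵐᵒᵖ] (↥V ⧸ Kr) := Kr.mkQ.comp W'.subtype with hf₀
      have hker₀ : LinearMap.ker ψ' ≤ LinearMap.ker f₀ := by
        intro x hx
        show Kr.mkQ (W'.subtype x) = 0
        rw [← LinearMap.mem_ker, Submodule.ker_mkQ]
        exact Submodule.mem_map_of_mem hx
      obtain ⟨f₁, hf₁⟩ := exists_factor (A := A) (M₁ := ↥W') (M₂ := S.1.carrier) (M₃ := ↥V ⧸ Kr) ψ' hψ's f₀ hker₀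
      have hf₁i : Injective f₁ := by
        rw [← LinearMap.ker_eq_bot]
        rcases eq_bot_or_eq_top (LinearMap.ker f₁) with h | h
        · exact h
        · exfalso
          have hz : f₁ = 0 := LinearMap.ker_eq_top.mp h
          have hf₀0 : f₀ = 0 := by rw [← hf₁, hz]; simp
          have : LinearMap.ker ψ' = ⊤ := by
            rw [eq_top_iff]
            intro x _
            have hx : f₀ x = 0 := by rw [hf₀0]; rfl
            have hx' : (x : ↥V) ∈ Kr := by
              rw [← Submodule.ker_mkQ Kr, LinearMap.mem_ker]
              exact hx
            obtain ⟨y, hy, hyx⟩ := hx'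
            have : y = x := Subtype.ext hyx
            rwa [this] at hy
          exact false_of_surj_zero (A := A) (Mc := ↥W') (Nc := S.1.carrier) (f := ψ') hψ's
            (LinearMap.ker_eq_top (f := ψ').mp this)
      have hKrW' : Kr ≤ LinearMap.ker W'.mkQ := by
        rw [Submodule.ker_mkQ, hKr]
        calc (LinearMap.ker ψ').map W'.subtype ≤ (⊤ : Submodule Aᵐᵒᵖ ↥W').map W'.subtype :=
              Submodule.map_mono le_top
        _ = W' := Submodule.map_subtype_top W'
      set g₁ : (↥V ⧸ Kr) →ₗ[Aᵐᵒᵖ] (↥V ⧸ W') := Kr.liftQ W'.mkQ hKrW' with hg₁def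
      have hg₁s : Surjective g₁ := by
        intro z
        obtain ⟨v, hv⟩ := W'.mkQ_surjective z
        refine ⟨Kr.mkQ v, ?_⟩
        rw [← hv]
        exact congrArg (fun h => h v) (Kr.liftQ_mkQ W'.mkQ hKrW')
      have hrk : LinearMap.range f₁ = LinearMap.ker g₁ := by
        have e1 : LinearMap.range f₁ = LinearMap.range f₀ := by
          rw [← hf₁]
          exact (LinearMap.range_comp_of_range_eq_top f₁
            (LinearMap.range_eq_top.mpr hψ's)).symm
        have e2 : LinearMap.range f₀ = W'.map Kr.mkQ := by
          rw [hf₀, LinearMap.range_comp, Submodule.range_subtype]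
        have e3 : LinearMap.ker g₁ = W'.map Kr.mkQ := by
          rw [hg₁def, Submodule.ker_liftQ, Submodule.ker_mkQ]
        rw [e1, e2, e3]
      haveI hZs : IsSimpleModule Aᵐᵒᵖ (↥V ⧸ W') := isSimpleModule_iff_isCoatom.mpr hW'
      by_cases hiso : Nonempty (S.1.carrier ≃ₗ[Aᵐᵒᵖ] (↥V ⧸ W'))
      · obtain ⟨e'⟩ := hiso
        exact ⟨e'.symm.toLinearMap.comp W'.mkQ, e'.symm.surjective.comp W'.mkQ_surjective⟩
      · obtain ⟨π, hπ⟩ := hsc S.1 (bund (↥V ⧸ Kr)) (bund (↥V ⧸ W')) f₁ g₁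
          hf₁i hg₁s hrk S.2 hZs hiso
        have hπs : Surjective π := by
          intro s
          exact ⟨f₁ s, congrArg (fun h => h s) hπ⟩
        exact ⟨π.comp Kr.mkQ, hπs.comp Kr.mkQ_surjective⟩
  obtain ⟨φ, hφ⟩ := main ⊤ N₀ le_top u₀ hu₀
  exact ⟨φ.comp Submodule.topEquiv.symm.toLinearMap,
    hφ.comp (LinearEquiv.surjective _)⟩

theorem psiT_phiT (hsc : SplitCond A) (T : Tors A) : PsiT (PhiT T) = T := by
  apply le_antisymm
  · refine psiT_le _ _ ?_
    rintro S ⟨S', hS', hS'T⟩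
    exact Tors.mem_of_equiv T hS'T (Classical.choice (cls_eq_iff.mp hS'))
  · intro M hM S hS
    obtain ⟨φ, hφ⟩ := surj_of_sq hsc M S hS
    exact ⟨S, rfl, Tors.mem_of_surj T hM φ hφ⟩

end Noeth

end Stmt4Proof
namespace Stmt4Proof

open Function LinearMap Submodule

set_option linter.unusedSectionVars false

variable {A : Type} [Ring A]

lemma sub_nontrivial {Mc : Type} [AddCommGroup Mc] [Module Aᵐᵒᵖ Mc]
    {U : Submodule Aᵐᵒᵖ Mc} (h : U ≠ ⊥) : Nontrivial ↥U := by
  have hex : ∃ x ∈ U, x ≠ (0 : Mc) := by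
    by_contra hc
    push_neg at hc
    exact h (eq_bot_iff.mpr fun x hx => by
      have := hc x hx
      simpa [this] using Submodule.zero_mem (⊥ : Submodule Aᵐᵒᵖ Mc))
  obtain ⟨x, hx, hxne⟩ := hex
  exact ⟨⟨x, hx⟩, 0, fun h' => hxne (congrArg Subtype.val h')⟩

section Noeth
variable [IsNoetherianRing Aᵐᵒᵖ] [IsArtinianRing Aᵐᵒᵖ]

set_option maxHeartbeats 1000000 in
theorem inj_step (hsc : SplitCond A) (Mc : Type) [AddCommGroup Mc] [Module Aᵐᵒᵖ Mc]
    [Module.Finite Aᵐᵒᵖ Mc] (U : Submodule Aᵐᵒᵖ Mc) (hU : IsSimpleModule Aᵐᵒᵖ ↥U)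
    (S : ModA A) (hS : IsSimpleModule Aᵐᵒᵖ S.carrier)
    (ι : S.carrier →ₗ[Aᵐᵒᵖ] (Mc ⧸ U)) (hι : Injective ι) :
    ∃ ι' : S.carrier →ₗ[Aᵐᵒᵖ] Mc, Injective ι' := by
  haveI : IsNoetherian Aᵐᵒᵖ Mc := isNoetherian_of_isNoetherianRing_of_finite _ _
  by_cases hiso : Nonempty (↥U ≃ₗ[Aᵐᵒᵖ] S.carrier)
  · obtain ⟨e⟩ := hiso
    exact ⟨U.subtype.comp e.symm.toLinearMap,
      (Submodule.injective_subtype U).comp e.symm.injective⟩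
  · set V : Submodule Aᵐᵒᵖ Mc := (LinearMap.range ι).comap U.mkQ with hV
    have hUV : U ≤ V := by
      intro x hx
      show U.mkQ x ∈ LinearMap.range ι
      have h0 : U.mkQ x = 0 := by
        rw [← LinearMap.mem_ker, Submodule.ker_mkQ]; exact hx
      rw [h0]; exact Submodule.zero_mem _
    let eι : S.carrier ≃ₗ[Aᵐᵒᵖ] ↥(LinearMap.range ι) := LinearEquiv.ofInjective ι hι
    have hmem : ∀ v : ↥V, (U.mkQ.comp V.subtype) v ∈ LinearMap.range ι := fun v => v.2
    set g0 : ↥V →ₗ[Aᵐᵒᵖ] ↥(LinearMap.range ι) :=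
      LinearMap.codRestrict (LinearMap.range ι) (U.mkQ.comp V.subtype) hmem with hg0
    set g : ↥V →ₗ[Aᵐᵒᵖ] S.carrier := eι.symm.toLinearMap.comp g0 with hg
    have hgs : Surjective g := by
      intro s
      obtain ⟨m, hm⟩ := U.mkQ_surjective (ι s)
      have hmV : m ∈ V := by
        show U.mkQ m ∈ LinearMap.range ι
        rw [hm]; exact ⟨s, rfl⟩
      refine ⟨⟨m, hmV⟩, ?_⟩
      have h1 : g0 ⟨m, hmV⟩ = eι s := by
        apply Subtype.ext
        show U.mkQ m = ((eι s : ↥(LinearMap.range ι)) : Mc ⧸ U)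
        rw [hm]
        rfl
      show eι.symm (g0 ⟨m, hmV⟩) = s
      rw [h1, LinearEquiv.symm_apply_apply]
    let fi : ↥U →ₗ[Aᵐᵒᵖ] ↥V := Submodule.inclusion hUV
    have hfi : Injective fi := Submodule.inclusion_injective hUV
    have hrk : LinearMap.range fi = LinearMap.ker g := by
      ext v
      rw [LinearMap.mem_ker]
      constructor
      · rintro ⟨u, rfl⟩
        show eι.symm (g0 (fi u)) = 0
        have h1 : g0 (fi u) = 0 := by
          apply Subtype.ext
          show U.mkQ ((u : Mc)) = 0
          rw [← LinearMap.mem_ker, Submodule.ker_mkQ]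
          exact u.2
        rw [h1, map_zero]
      · intro hv
        have h0 : g0 v = 0 := by
          have h2 := congrArg eι hv
          rwa [show g v = eι.symm (g0 v) from rfl, LinearEquiv.apply_symm_apply,
            map_zero] at h2
        have hvU : (v : Mc) ∈ U := by
          have h3 : U.mkQ (v : Mc) = 0 := congrArg Subtype.val h0
          rw [← Submodule.ker_mkQ U]
          exact LinearMap.mem_ker.mpr h3
        exact ⟨⟨(v : Mc), hvU⟩, Subtype.ext rfl⟩
    obtain ⟨π, hπ⟩ := hsc (bund ↥U) (bund ↥V) S fi g hfi hgs hrk hU hS hiso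
    obtain ⟨s, hsec⟩ := section_of_retraction fi g hgs hrk π hπ
    have hgsec : ∀ z, g (s z) = z := fun z => congrArg (fun h => h z) hsec
    have hsinj : Injective s := fun a b hab => by
      rw [← hgsec a, ← hgsec b, hab]
    exact ⟨V.subtype.comp s, (Submodule.injective_subtype V).comp hsinj⟩

set_option maxHeartbeats 1000000 in
theorem inj_of_quot (hsc : SplitCond A) (Mc : Type) [AddCommGroup Mc] [Module Aᵐᵒᵖ Mc]
    [Module.Finite Aᵐᵒᵖ Mc] (S : ModA A) (hS : IsSimpleModule Aᵐᵒᵖ S.carrier)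
    (U : Submodule Aᵐᵒᵖ Mc) (ι : S.carrier →ₗ[Aᵐᵒᵖ] (Mc ⧸ U)) (hι : Injective ι) :
    ∃ ι' : S.carrier →ₗ[Aᵐᵒᵖ] Mc, Injective ι' := by
  haveI : IsNoetherian Aᵐᵒᵖ Mc := isNoetherian_of_isNoetherianRing_of_finite _ _
  haveI : IsArtinian Aᵐᵒᵖ Mc := isArtinian_of_fg_of_artinian'
  induction U using IsArtinian.induction with
  | _ U IH =>
  by_cases hU : U = ⊥
  · subst hU
    refine ⟨(Submodule.quotEquivOfEqBot ⊥ rfl).toLinearMap.comp ι, ?_⟩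
    rw [LinearMap.coe_comp]
    exact (LinearEquiv.injective _).comp hι
  · haveI : Nontrivial ↥U := sub_nontrivial hU
    obtain ⟨W', hW', -⟩ := exists_coatom_ge (bot_ne_top_of_nontrivial (A := A) (Mc := ↥U))
    set U₁ : Submodule Aᵐᵒᵖ Mc := W'.map U.subtype with hU₁def
    have h1 : U₁ ≤ U := Submodule.map_subtype_le U W'
    have h2 : U₁ ≠ U := by
      intro h
      refine hW'.1 (Submodule.map_injective_of_injective
        (Submodule.injective_subtype U) ?_)
      rw [Submodule.map_subtype_top]
      exact h
    have hU₁U : U₁ < U := lt_of_le_of_ne h1 h2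
    set U' : Submodule Aᵐᵒᵖ (Mc ⧸ U₁) := U.map U₁.mkQ with hU'def
    have hres : ∀ x ∈ U, U₁.mkQ x ∈ U' := fun x hx => Submodule.mem_map_of_mem hx
    set θ : ↥U →ₗ[Aᵐᵒᵖ] ↥U' := (U₁.mkQ).restrict hres with hθ
    have hθs : Surjective θ := by
      intro y
      obtain ⟨u, hu, huy⟩ := y.2
      exact ⟨⟨u, hu⟩, Subtype.ext huy⟩
    have hθk : LinearMap.ker θ = W' := by
      ext x
      rw [LinearMap.mem_ker]
      constructor
      · intro hx
        have h3 : U₁.mkQ (x : Mc) = 0 := congrArg Subtype.val hx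
        have h4 : (x : Mc) ∈ U₁ := by
          rw [← Submodule.ker_mkQ U₁]
          exact LinearMap.mem_ker.mpr h3
        obtain ⟨y, hy, hyx⟩ := h4
        have : y = x := Subtype.ext hyx
        rwa [this] at hy
      · intro hx
        apply Subtype.ext
        show U₁.mkQ (x : Mc) = 0
        rw [← LinearMap.mem_ker, Submodule.ker_mkQ]
        exact ⟨x, hx, rfl⟩
    haveI hU's : IsSimpleModule Aᵐᵒᵖ ↥U' := by
      haveI : IsSimpleModule Aᵐᵒᵖ (↥U ⧸ LinearMap.ker θ) := by
        rw [hθk]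
        exact isSimpleModule_iff_isCoatom.mpr hW'
      exact IsSimpleModule.congr (θ.quotKerEquivOfSurjective hθs).symm
    let qq := Submodule.quotientQuotientEquivQuotient U₁ U (le_of_lt hU₁U)
    have hι₂ : Injective (qq.symm.toLinearMap.comp ι) := qq.symm.injective.comp hι
    obtain ⟨ι₃, hι₃⟩ := inj_step hsc (Mc ⧸ U₁) U' hU's S hS
      (qq.symm.toLinearMap.comp ι) hι₂
    exact IH U₁ hU₁U ι₃ hι₃

theorem simple_of_brick (hsc : SplitCond A) (B : ModA A) (hB : IsBrick B) :
    IsSimpleModule Aᵐᵒᵖ B.carrier := by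
  haveI := hB.1
  obtain ⟨W, hW, -⟩ := exists_coatom_ge
    (bot_ne_top_of_nontrivial (A := A) (Mc := B.carrier))
  haveI hQs : IsSimpleModule Aᵐᵒᵖ (B.carrier ⧸ W) := isSimpleModule_iff_isCoatom.mpr hW
  obtain ⟨ι', hι'⟩ := inj_of_quot hsc B.carrier (bund (B.carrier ⧸ W)) hQs W
    LinearMap.id injective_id
  set f : B.carrier →ₗ[Aᵐᵒᵖ] B.carrier := ι'.comp W.mkQ with hf
  have hf0 : f ≠ 0 := by
    intro h
    haveI : Nontrivial (B.carrier ⧸ W) := IsSimpleModule.nontrivial Aᵐᵒᵖ _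
    obtain ⟨a, b, hab⟩ := exists_pair_ne (B.carrier ⧸ W)
    obtain ⟨x, hx⟩ := W.mkQ_surjective a
    obtain ⟨y, hy⟩ := W.mkQ_surjective b
    apply hab
    apply hι'
    show ι' a = ι' b
    rw [← hx, ← hy]
    show f x = f y
    rw [h]
    rfl
  have hbij := hB.2 f hf0
  have hker : LinearMap.ker f = W := by
    ext x
    show ι' (W.mkQ x) = 0 ↔ x ∈ W
    rw [← Submodule.Quotient.mk_eq_zero W (x := x)]
    exact ⟨fun h => hι' (h.trans (map_zero ι').symm),
      fun h => by
        have h' : W.mkQ x = 0 := h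
        exact (congrArg ι' h').trans (map_zero ι')⟩
  have hWbot : W = ⊥ := by
    rw [← hker]
    exact LinearMap.ker_eq_bot.mpr hbij.1
  rw [hWbot] at hQs
  haveI := hQs
  exact IsSimpleModule.congr (Submodule.quotEquivOfEqBot ⊥ rfl).symm

end Noeth

end Stmt4Proof
namespace Stmt4Proof

open Function LinearMap Submodule

set_option linter.unusedSectionVars false

variable {A : Type} [Ring A]

lemma le_simple_sub {Mc : Type} [AddCommGroup Mc] [Module Aᵐᵒᵖ Mc]
    {R : Submodule Aᵐᵒᵖ Mc} (hR : IsSimpleModule Aᵐᵒᵖ ↥R) {p : Submodule Aᵐᵒᵖ Mc}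
    (hp : p ≤ R) : p = ⊥ ∨ p = R := by
  haveI := hR
  rcases eq_bot_or_eq_top (p.comap R.subtype) with h | h
  · left
    rw [eq_bot_iff]
    intro x hx
    have h1 : (⟨x, hp hx⟩ : ↥R) ∈ p.comap R.subtype := hx
    rw [h] at h1
    have h2 := (Submodule.mem_bot _).mp h1
    simpa using congrArg Subtype.val h2
  · right
    refine le_antisymm hp fun x hx => ?_
    have h1 : (⟨x, hx⟩ : ↥R) ∈ p.comap R.subtype := by rw [h]; trivial
    exact h1

section Noeth
variable [IsNoetherianRing Aᵐᵒᵖ] [IsArtinianRing Aᵐᵒᵖ]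

theorem submodule_trichotomy {X Y Z : ModA A}
    (f : X.carrier →ₗ[Aᵐᵒᵖ] Y.carrier) (g : Y.carrier →ₗ[Aᵐᵒᵖ] Z.carrier)
    (hf : Injective f) (hg : Surjective g) (he : LinearMap.range f = LinearMap.ker g)
    (hX : IsSimpleModule Aᵐᵒᵖ X.carrier) (hZ : IsSimpleModule Aᵐᵒᵖ Z.carrier)
    (hno : ∀ π : Y.carrier →ₗ[Aᵐᵒᵖ] X.carrier, π.comp f ≠ LinearMap.id) :
    ∀ U : Submodule Aᵐᵒᵖ Y.carrier,
      U = ⊥ ∨ U = LinearMap.range f ∨ U = ⊤ := by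
  haveI := hX; haveI := hZ
  have hRsimple : IsSimpleModule Aᵐᵒᵖ ↥(LinearMap.range f) :=
    IsSimpleModule.congr (LinearEquiv.ofInjective f hf).symm
  have hnc : ∀ C : Submodule Aᵐᵒᵖ Y.carrier, ¬ IsCompl (LinearMap.range f) C := by
    intro C hC
    apply hno ((LinearEquiv.ofInjective f hf).symm.toLinearMap.comp
      ((LinearMap.range f).linearProjOfIsCompl C hC))
    ext x
    show (LinearEquiv.ofInjective f hf).symm
      ((LinearMap.range f).linearProjOfIsCompl C hC (f x)) = x
    have h1 : (LinearMap.range f).linearProjOfIsCompl C hC (f x)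
        = (⟨f x, LinearMap.mem_range_self f x⟩ : ↥(LinearMap.range f)) :=
      Submodule.linearProjOfIsCompl_apply_left hC ⟨f x, LinearMap.mem_range_self f x⟩
    have h2 : (LinearEquiv.ofInjective f hf) x
        = (⟨f x, LinearMap.mem_range_self f x⟩ : ↥(LinearMap.range f)) :=
      Subtype.ext rfl
    rw [h1, ← h2, LinearEquiv.symm_apply_apply]
  intro U
  have hUker : U.map g = ⊥ → U ≤ LinearMap.range f := by
    intro hU x hx
    rw [he, LinearMap.mem_ker]
    have h1 : g x ∈ U.map g := Submodule.mem_map_of_mem hx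
    rw [hU] at h1
    exact (Submodule.mem_bot _).mp h1
  have hUtop : U.map g = ⊤ → LinearMap.range f ≤ U → U = ⊤ := by
    intro hU hRU
    rw [eq_top_iff]
    intro y _
    have h1 : g y ∈ U.map g := by rw [hU]; trivial
    obtain ⟨u, hu, huy⟩ := h1
    have h2 : y - u ∈ LinearMap.range f := by
      rw [he, LinearMap.mem_ker, map_sub, huy, sub_self]
    have h3 : y - u + u ∈ U := Submodule.add_mem U (hRU h2) hu
    simpa using h3
  rcases le_simple_sub hRsimple (inf_le_right : U ⊓ LinearMap.range f ≤ _) with hUR | hUR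
  · rcases eq_bot_or_eq_top (U.map g) with hU | hU
    · left
      have hUle : U ≤ LinearMap.range f := hUker hU
      rw [← hUR]
      exact (inf_of_le_left hUle).symm
    · exfalso
      apply hnc U
      constructor
      · rw [disjoint_iff, inf_comm]
        exact hUR
      · rw [codisjoint_iff, eq_top_iff]
        intro y _
        have h1 : g y ∈ U.map g := by rw [hU]; trivial
        obtain ⟨u, hu, huy⟩ := h1
        have h2 : y - u ∈ LinearMap.range f := by
          rw [he, LinearMap.mem_ker, map_sub, huy, sub_self]
        exact Submodule.mem_sup.mpr ⟨y - u, h2, u, hu, by simp⟩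
  · have hRU : LinearMap.range f ≤ U := by rw [← hUR]; exact inf_le_left
    rcases eq_bot_or_eq_top (U.map g) with hU | hU
    · right; left
      exact le_antisymm (hUker hU) hRU
    · right; right
      exact hUtop hU hRU

end Noeth

end Stmt4Proof
namespace Stmt4Proof

open Function LinearMap Submodule

set_option linter.unusedSectionVars false

variable {A : Type} [Ring A]

section Noeth
variable [IsNoetherianRing Aᵐᵒᵖ] [IsArtinianRing Aᵐᵒᵖ]

set_option maxHeartbeats 1000000 in
theorem brick_of_nonsplit {X Y Z : ModA A}
    (f : X.carrier →ₗ[Aᵐᵒᵖ] Y.carrier) (g : Y.carrier →ₗ[Aᵐᵒᵖ] Z.carrier)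
    (hf : Injective f) (hg : Surjective g) (he : LinearMap.range f = LinearMap.ker g)
    (hX : IsSimpleModule Aᵐᵒᵖ X.carrier) (hZ : IsSimpleModule Aᵐᵒᵖ Z.carrier)
    (hni : ¬ Nonempty (X.carrier ≃ₗ[Aᵐᵒᵖ] Z.carrier))
    (hno : ∀ π : Y.carrier →ₗ[Aᵐᵒᵖ] X.carrier, π.comp f ≠ LinearMap.id) :
    IsBrick Y := by
  haveI := hX; haveI := hZ
  haveI : Nontrivial X.carrier := IsSimpleModule.nontrivial Aᵐᵒᵖ _
  haveI : Nontrivial Z.carrier := IsSimpleModule.nontrivial Aᵐᵒᵖ _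
  have htri := submodule_trichotomy f g hf hg he hX hZ hno
  have hRbot : LinearMap.range f ≠ ⊥ := by
    intro h
    obtain ⟨x, hx⟩ := exists_ne (0 : X.carrier)
    apply hx
    apply hf
    have h1 : f x ∈ LinearMap.range f := ⟨x, rfl⟩
    rw [h] at h1
    rw [(Submodule.mem_bot _).mp h1, map_zero]
  have hRtop : LinearMap.range f ≠ ⊤ := by
    intro h
    have h2 : LinearMap.ker g = ⊤ := by rw [← he, h]
    exact false_of_surj_zero hg (LinearMap.ker_eq_top.mp h2)
  constructor
  · obtain ⟨x, hx⟩ := exists_ne (0 : X.carrier)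
    exact ⟨f x, 0, fun h => hx (hf (by rw [h, map_zero]))⟩
  · intro e0 he0
    rcases htri (LinearMap.ker e0) with hk | hk | hk
    · -- injective, hence bijective
      have hinj : Injective e0 := LinearMap.ker_eq_bot.mp hk
      exact ⟨hinj, IsArtinian.surjective_of_injective_endomorphism e0 hinj⟩
    · -- ker e0 = range f
      exfalso
      rcases htri (LinearMap.range e0) with hr | hr | hr
      · exact he0 (LinearMap.range_eq_bot.mp hr)
      · -- X ≃ Z, contradiction
        apply hni
        have hkg : LinearMap.ker e0 = LinearMap.ker g := by rw [hk, he]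
        refine ⟨((LinearEquiv.ofInjective f hf).trans
          ((LinearEquiv.ofEq _ _ hr.symm).trans
            ((e0.quotKerEquivRange).symm.trans
              ((Submodule.quotEquivOfEq _ _ hkg).trans
                (g.quotKerEquivOfSurjective hg))))) ⟩
      · -- Y ≃ Z : Y simple, contradiction with range f proper
        have hsurj : Surjective e0 := LinearMap.range_eq_top.mp hr
        have hkg : LinearMap.ker e0 = LinearMap.ker g := by rw [hk, he]
        have eYZ : Y.carrier ≃ₗ[Aᵐᵒᵖ] Z.carrier :=
          (e0.quotKerEquivOfSurjective hsurj).symm.trans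
            ((Submodule.quotEquivOfEq _ _ hkg).trans (g.quotKerEquivOfSurjective hg))
        haveI hYs : IsSimpleModule Aᵐᵒᵖ Y.carrier := IsSimpleModule.congr eYZ
        rcases eq_bot_or_eq_top (LinearMap.range f) with h | h
        · exact hRbot h
        · exact hRtop h
    · exact absurd (LinearMap.ker_eq_top.mp hk) he0

theorem split_of_rhs (hr : ∀ B : ModA A, IsBrick B → ∃ S : ModA A,
    IsSimpleModule Aᵐᵒᵖ S.carrier ∧ Nonempty (B.carrier ≃ₗ[Aᵐᵒᵖ] S.carrier)) :
    SplitCond A := by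
  intro X Y Z f g hf hg he hX hZ hni
  by_contra hno
  push_neg at hno
  have hbrick := brick_of_nonsplit f g hf hg he hX hZ hni hno
  obtain ⟨S, hSs, ⟨eYS⟩⟩ := hr Y hbrick
  haveI := hSs
  haveI hYs : IsSimpleModule Aᵐᵒᵖ Y.carrier := IsSimpleModule.congr eYS
  haveI := hX; haveI := hZ
  haveI : Nontrivial X.carrier := IsSimpleModule.nontrivial Aᵐᵒᵖ _
  haveI : Nontrivial Z.carrier := IsSimpleModule.nontrivial Aᵐᵒᵖ _
  rcases eq_bot_or_eq_top (LinearMap.range f) with h | h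
  · obtain ⟨x, hx⟩ := exists_ne (0 : X.carrier)
    apply hx
    apply hf
    have h1 : f x ∈ LinearMap.range f := ⟨x, rfl⟩
    rw [h] at h1
    rw [(Submodule.mem_bot _).mp h1, map_zero]
  · have h2 : LinearMap.ker g = ⊤ := by rw [← he, h]
    exact false_of_surj_zero hg (LinearMap.ker_eq_top.mp h2)

end Noeth

end Stmt4Proof
namespace Stmt4Proof

open Function LinearMap Submodule

set_option linter.unusedSectionVars false

variable {A : Type} [Ring A]

/-- The class of modules all of whose simple quotients lie in class `q`. -/
def TopSet (q : Qt A) : Set (ModA A) :=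
  {M | ∀ S : SimpleMod A,
    (∃ φ : M.carrier →ₗ[Aᵐᵒᵖ] S.1.carrier, Surjective φ) → cls S = q}

theorem isTorsionClass_topSet (q : Qt A) : IsTorsionClass (TopSet q) := by
  refine ⟨?_, ?_, ?_⟩
  · intro N hN S hS
    obtain ⟨φ, hφ⟩ := hS
    haveI := hN
    haveI := S.2
    haveI : Nontrivial S.1.carrier := IsSimpleModule.nontrivial Aᵐᵒᵖ _
    exact (false_of_surj_subsingleton φ hφ).elim
  · intro M N hM f hf S hS
    obtain ⟨φ, hφ⟩ := hS
    exact hM S ⟨φ.comp f, hφ.comp hf⟩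
  · intro X Y Z f g hfi hgs he hX hZ S hS
    obtain ⟨φ, hφ⟩ := hS
    haveI := S.2
    rcases eq_bot_or_eq_top (LinearMap.range (φ.comp f)) with h | h
    · have hk : LinearMap.ker g ≤ LinearMap.ker φ := by
        rw [← he]
        rintro y ⟨x, rfl⟩
        have h1 : φ (f x) ∈ LinearMap.range (φ.comp f) := ⟨x, rfl⟩
        rw [h] at h1
        exact LinearMap.mem_ker.mpr ((Submodule.mem_bot _).mp h1)
      obtain ⟨v, hv⟩ := exists_factor g hgs φ hk
      have hvs : Surjective v := by
        intro s
        obtain ⟨y, hy⟩ := hφ s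
        exact ⟨g y, by rw [← hy, ← hv]; rfl⟩
      exact hZ S ⟨v, hvs⟩
    · exact hX S ⟨φ.comp f, LinearMap.range_eq_top.mp h⟩

def TopT (q : Qt A) : Tors A := ⟨TopSet q, isTorsionClass_topSet q⟩

section Noeth
variable [IsNoetherianRing Aᵐᵒᵖ] [IsArtinianRing Aᵐᵒᵖ]

lemma psiT_cov (q : Qt A) {m : Tors A} (hle : m ≤ PsiT {q})
    (hz : ∀ M ∈ m.1, Subsingleton M.carrier) (hne : m ≠ PsiT {q}) :
    m ⋖ PsiT {q} := by
  constructor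
  · exact lt_of_le_of_ne hle hne
  · intro c hmc hclt
    have hcle : c ≤ PsiT {q} := le_of_lt hclt
    obtain ⟨M, hMc, hMm⟩ : ∃ M, M ∈ c.1 ∧ M ∉ m.1 := by
      by_contra hcon
      push_neg at hcon
      exact absurd (le_antisymm hmc.le hcon) hmc.ne
    haveI hMnt : Nontrivial M.carrier := by
      rcases subsingleton_or_nontrivial M.carrier with h | h
      · exact absurd (Tors.zero_mem m M h) hMm
      · exact h
    obtain ⟨W, hW, -⟩ := exists_coatom_ge
      (bot_ne_top_of_nontrivial (A := A) (Mc := M.carrier))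
    haveI hQs : IsSimpleModule Aᵐᵒᵖ (M.carrier ⧸ W) := isSimpleModule_iff_isCoatom.mpr hW
    set SQ : SimpleMod A := ⟨bund (M.carrier ⧸ W), hQs⟩ with hSQ
    have hSQc : SQ.1 ∈ c.1 := Tors.mem_of_surj c hMc W.mkQ W.mkQ_surjective
    have hq : cls SQ = q := by
      have h1 := hcle hMc SQ (IsSQ.of_quot W.mkQ W.mkQ_surjective)
      simpa using h1
    have hle2 : PsiT {q} ≤ c := by
      refine psiT_le _ _ (fun S' hS' => ?_)
      have h1 : cls S' = q := by simpa using hS'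
      have h2 : cls S' = cls SQ := by rw [h1, hq]
      exact Tors.mem_of_equiv c hSQc (Classical.choice (cls_eq_iff.mp h2)).symm
    exact lt_irrefl c (lt_of_lt_of_le hclt hle2)

set_option maxHeartbeats 1000000 in
theorem split_of_usm (husm : UpperSemimodular (Tors A)) : SplitCond A := by
  intro X Y Z f g hf hg he hX hZ hni
  by_contra hno
  push_neg at hno
  haveI := hX; haveI := hZ
  haveI : Nontrivial X.carrier := IsSimpleModule.nontrivial Aᵐᵒᵖ _
  haveI : Nontrivial Z.carrier := IsSimpleModule.nontrivial Aᵐᵒᵖ _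
  have htri := submodule_trichotomy f g hf hg he hX hZ hno
  set S₁ : SimpleMod A := ⟨Z, hZ⟩ with hS₁
  set S₂ : SimpleMod A := ⟨X, hX⟩ with hS₂
  have hq12 : cls S₁ ≠ cls S₂ := by
    intro h
    exact hni ⟨(Classical.choice (cls_eq_iff.mp h)).symm⟩
  set a := PsiT {cls S₁} with ha
  set b := PsiT {cls S₂} with hb
  have hmz : ∀ M ∈ (a ⊓ b).1, Subsingleton M.carrier := by
    intro M hM
    rcases subsingleton_or_nontrivial M.carrier with h | h
    · exact h
    · exfalso
      haveI := h
      obtain ⟨W, hW, -⟩ := exists_coatom_ge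
        (bot_ne_top_of_nontrivial (A := A) (Mc := M.carrier))
      haveI hQs : IsSimpleModule Aᵐᵒᵖ (M.carrier ⧸ W) :=
        isSimpleModule_iff_isCoatom.mpr hW
      set SQ : SimpleMod A := ⟨bund (M.carrier ⧸ W), hQs⟩ with hSQ
      obtain ⟨hMa, hMb⟩ := Tors.mem_inf.mp hM
      have h1 : cls SQ = cls S₁ := by
        simpa using hMa SQ (IsSQ.of_quot W.mkQ W.mkQ_surjective)
      have h2 : cls SQ = cls S₂ := by
        simpa using hMb SQ (IsSQ.of_quot W.mkQ W.mkQ_surjective)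
      exact hq12 (h1.symm.trans h2)
  have hZa : S₁.1 ∈ a.1 := simple_mem_psiSet rfl
  have hXb : S₂.1 ∈ b.1 := simple_mem_psiSet rfl
  have hma : a ⊓ b ⋖ a := by
    refine psiT_cov _ inf_le_left hmz ?_
    intro hcon
    have h1 : S₁.1 ∈ (a ⊓ b).1 := by rw [hcon]; exact hZa
    exact absurd (hmz _ h1) (not_subsingleton _)
  have hmb : a ⊓ b ⋖ b := by
    refine psiT_cov _ inf_le_right hmz ?_
    intro hcon
    have h1 : S₂.1 ∈ (a ⊓ b).1 := by rw [hcon]; exact hXb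
    exact absurd (hmz _ h1) (not_subsingleton _)
  obtain ⟨haj, hbj⟩ := husm a b hma hmb
  set c := torsGen (a.1 ∪ {Y}) with hc
  have hac : a ≤ c := fun M hM => torsGen_mem (Set.mem_union_left _ hM)
  have hYc : Y ∈ c.1 := torsGen_mem (Set.mem_union_right _ rfl)
  have hYa : Y ∉ a.1 := by
    intro hYa
    have hsq : IsSQ S₂.1 Y.carrier := ⟨LinearMap.range f,
      (LinearEquiv.ofInjective f hf).symm.toLinearMap,
      (LinearEquiv.ofInjective f hf).symm.surjective⟩
    have h1 : cls S₂ = cls S₁ := by simpa using hYa S₂ hsq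
    exact hq12 h1.symm
  have hXj : X ∈ (a ⊔ b).1 := (le_sup_right : b ≤ a ⊔ b) hXb
  have hZj : Z ∈ (a ⊔ b).1 := (le_sup_left : a ≤ a ⊔ b) hZa
  have hYj : Y ∈ (a ⊔ b).1 := Tors.mem_ext _ f g hf hg he hXj hZj
  have hcj : c ≤ a ⊔ b := by
    refine torsGen_le ?_
    intro M hM
    rcases hM with hM | hM
    · exact (le_sup_left : a ≤ a ⊔ b) hM
    · rw [Set.mem_singleton_iff.mp hM]
      exact hYj
  have hXc : X ∉ c.1 := by
    intro hXc
    have hsub : a.1 ∪ {Y} ⊆ TopSet (cls S₁) := by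
      intro M hM
      rcases hM with hM | hM
      · intro S hs
        obtain ⟨φ, hφ⟩ := hs
        simpa using hM S (IsSQ.of_quot φ hφ)
      · rw [Set.mem_singleton_iff.mp hM]
        intro S hs
        obtain ⟨φ, hφ⟩ := hs
        haveI := S.2
        haveI : Nontrivial S.1.carrier := IsSimpleModule.nontrivial Aᵐᵒᵖ _
        rcases htri (LinearMap.ker φ) with hk | hk | hk
        · exfalso
          have hbij : Bijective φ := ⟨LinearMap.ker_eq_bot.mp hk, hφ⟩
          haveI hYs : IsSimpleModule Aᵐᵒᵖ Y.carrier :=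
            IsSimpleModule.congr (LinearEquiv.ofBijective φ hbij)
          rcases eq_bot_or_eq_top (LinearMap.range f) with h | h
          · obtain ⟨x, hx⟩ := exists_ne (0 : X.carrier)
            apply hx
            apply hf
            have h1 : f x ∈ LinearMap.range f := ⟨x, rfl⟩
            rw [h] at h1
            rw [(Submodule.mem_bot _).mp h1, map_zero]
          · have h2 : LinearMap.ker g = ⊤ := by rw [← he, h]
            exact false_of_surj_zero hg (LinearMap.ker_eq_top.mp h2)
        · have hkg : LinearMap.ker g ≤ LinearMap.ker φ := by rw [← he, ← hk]
          obtain ⟨v, hv⟩ := exists_factor g hg φ hkg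
          have hvs : Surjective v := fun s => by
            obtain ⟨y, hy⟩ := hφ s
            exact ⟨g y, by rw [← hy, ← hv]; rfl⟩
          have hvi : Injective v := by
            rw [← LinearMap.ker_eq_bot]
            rcases eq_bot_or_eq_top (LinearMap.ker v) with h | h
            · exact h
            · exact (false_of_surj_zero hvs (LinearMap.ker_eq_top.mp h)).elim
          exact cls_eq_iff.mpr ⟨(LinearEquiv.ofBijective v ⟨hvi, hvs⟩).symm⟩
        · exact (false_of_surj_zero hφ (LinearMap.ker_eq_top.mp hk)).elim
    have hle : c ≤ TopT (cls S₁) := torsGen_le hsub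
    have h1 : cls S₂ = cls S₁ := hle hXc S₂ ⟨LinearMap.id, surjective_id⟩
    exact hq12 h1.symm
  have halt : a < c := lt_of_le_of_ne hac (fun h => hYa (h ▸ hYc))
  have hclt : c < a ⊔ b := lt_of_le_of_ne hcj (fun h => hXc (h ▸ hXj))
  exact haj.2 halt hclt

end Noeth

end Stmt4Proof
namespace Stmt4Proof

open Function LinearMap Submodule

set_option linter.unusedSectionVars false

variable {A : Type} [Ring A]

lemma phiT_mono {x y : Tors A} (h : x ≤ y) : PhiT x ⊆ PhiT y := by
  rintro q ⟨S, hS, hST⟩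
  exact ⟨S, hS, h hST⟩

lemma psiT_mono {σ τ : Set (Qt A)} (h : σ ⊆ τ) : PsiT σ ≤ PsiT τ :=
  fun M hM S hS => h (hM S hS)

lemma set_usm {κ : Type*} {s t : Set κ} (h1 : s ∩ t ⋖ s) (h2 : s ∩ t ⋖ t) :
    s ⋖ s ∪ t ∧ t ⋖ s ∪ t := by
  obtain ⟨x, hxs, hxnt⟩ : ∃ x, x ∈ s ∧ x ∉ t := by
    obtain ⟨x, hxs, hxn⟩ := Set.exists_of_ssubset h1.1
    exact ⟨x, hxs, fun hxt => hxn ⟨hxs, hxt⟩⟩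
  obtain ⟨y, hyt, hyns⟩ : ∃ y, y ∈ t ∧ y ∉ s := by
    obtain ⟨y, hyt, hyn⟩ := Set.exists_of_ssubset h2.1
    exact ⟨y, hyt, fun hys => hyn ⟨hys, hyt⟩⟩
  have hs : s = insert x (s ∩ t) := by
    have hlt : s ∩ t < insert x (s ∩ t) :=
      lt_of_le_of_ne (Set.subset_insert x _)
        (fun hcon => hxnt (hcon ▸ Set.mem_insert x (s ∩ t) : x ∈ s ∩ t).2)
    have hle : insert x (s ∩ t) ⊆ s := by
      rw [Set.insert_subset_iff]
      exact ⟨hxs, Set.inter_subset_left⟩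
    by_contra hne
    exact h1.2 hlt (lt_of_le_of_ne hle fun hcon => hne hcon.symm)
  have ht : t = insert y (s ∩ t) := by
    have hlt : s ∩ t < insert y (s ∩ t) :=
      lt_of_le_of_ne (Set.subset_insert y _)
        (fun hcon => hyns (hcon ▸ Set.mem_insert y (s ∩ t) : y ∈ s ∩ t).1)
    have hle : insert y (s ∩ t) ⊆ t := by
      rw [Set.insert_subset_iff]
      exact ⟨hyt, Set.inter_subset_right⟩
    by_contra hne
    exact h2.2 hlt (lt_of_le_of_ne hle fun hcon => hne hcon.symm)
  have hus : s ∪ t = insert y s := by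
    apply Set.Subset.antisymm
    · refine Set.union_subset (Set.subset_insert y s) ?_
      rw [ht]
      exact Set.insert_subset_insert Set.inter_subset_left
    · rw [Set.insert_subset_iff]
      exact ⟨Set.mem_union_right s hyt, Set.subset_union_left⟩
  have hut : s ∪ t = insert x t := by
    apply Set.Subset.antisymm
    · refine Set.union_subset ?_ (Set.subset_insert x t)
      rw [hs]
      exact Set.insert_subset_insert Set.inter_subset_right
    · rw [Set.insert_subset_iff]
      exact ⟨Set.mem_union_left t hxs, Set.subset_union_right⟩
  constructor
  · refine ⟨lt_of_le_of_ne Set.subset_union_left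
      (fun hcon => hyns (hcon ▸ Set.mem_union_right s hyt)), ?_⟩
    intro cset hc1 hc2
    obtain ⟨z, hzc, hzns⟩ := Set.exists_of_ssubset hc1
    have hz : z = y := by
      have hzin : z ∈ s ∪ t := le_of_lt hc2 hzc
      rw [hus] at hzin
      rcases Set.mem_insert_iff.mp hzin with h | h
      · exact h
      · exact absurd h hzns
    have hsub : s ∪ t ⊆ cset := by
      rw [hus, Set.insert_subset_iff]
      exact ⟨hz ▸ hzc, le_of_lt hc1⟩
    exact absurd (lt_of_lt_of_le hc2 hsub) (lt_irrefl cset)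
  · refine ⟨lt_of_le_of_ne Set.subset_union_right
      (fun hcon => hxnt (hcon ▸ Set.mem_union_left t hxs)), ?_⟩
    intro cset hc1 hc2
    obtain ⟨z, hzc, hznt⟩ := Set.exists_of_ssubset hc1
    have hz : z = x := by
      have hzin : z ∈ s ∪ t := le_of_lt hc2 hzc
      rw [hut] at hzin
      rcases Set.mem_insert_iff.mp hzin with h | h
      · exact h
      · exact absurd h hznt
    have hsub : s ∪ t ⊆ cset := by
      rw [hut, Set.insert_subset_iff]
      exact ⟨hz ▸ hzc, le_of_lt hc1⟩
    exact absurd (lt_of_lt_of_le hc2 hsub) (lt_irrefl cset)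

section Noeth
variable [IsNoetherianRing Aᵐᵒᵖ] [IsArtinianRing Aᵐᵒᵖ]

lemma phiT_le_iff (hsc : SplitCond A) {x y : Tors A} : x ≤ y ↔ PhiT x ⊆ PhiT y := by
  refine ⟨phiT_mono, fun h => ?_⟩
  have h2 := psiT_mono h
  rwa [psiT_phiT hsc, psiT_phiT hsc] at h2

lemma phiT_inj (hsc : SplitCond A) {x y : Tors A} (h : PhiT x = PhiT y) : x = y := by
  have h2 := congrArg PsiT h
  rwa [psiT_phiT hsc, psiT_phiT hsc] at h2

lemma phiT_inf (x y : Tors A) : PhiT (x ⊓ y) = PhiT x ∩ PhiT y := by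
  apply Set.Subset.antisymm
  · exact Set.subset_inter (phiT_mono inf_le_left) (phiT_mono inf_le_right)
  · rintro q ⟨⟨S, hS, hSx⟩, ⟨S', hS', hS'y⟩⟩
    refine ⟨S', hS', Tors.mem_inf.mpr ⟨?_, hS'y⟩⟩
    have h2 : cls S = cls S' := by rw [hS, hS']
    exact Tors.mem_of_equiv x hSx (Classical.choice (cls_eq_iff.mp h2))

lemma phiT_sup (hsc : SplitCond A) (x y : Tors A) :
    PhiT (x ⊔ y) = PhiT x ∪ PhiT y := by
  apply Set.Subset.antisymm
  · have h1 : x ⊔ y ≤ PsiT (PhiT x ∪ PhiT y) :=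
      sup_le (le_of_eq_of_le (psiT_phiT hsc x).symm (psiT_mono Set.subset_union_left))
        (le_of_eq_of_le (psiT_phiT hsc y).symm (psiT_mono Set.subset_union_right))
    have h2 := phiT_mono h1
    rwa [phiT_psiT] at h2
  · exact Set.union_subset (phiT_mono le_sup_left) (phiT_mono le_sup_right)

lemma phiT_lt_iff (hsc : SplitCond A) {x y : Tors A} : x < y ↔ PhiT x < PhiT y := by
  constructor
  · intro h
    exact lt_of_le_of_ne (phiT_mono h.le) fun he => h.ne (phiT_inj hsc he)
  · intro h
    exact lt_of_le_of_ne ((phiT_le_iff hsc).mpr h.le) fun he => h.ne (congrArg PhiT he)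

lemma phiT_cov_iff (hsc : SplitCond A) {x y : Tors A} : x ⋖ y ↔ PhiT x ⋖ PhiT y := by
  constructor
  · intro h
    refine ⟨(phiT_lt_iff hsc).mp h.1, fun σ h1 h2 => ?_⟩
    exact h.2 ((phiT_lt_iff hsc).mpr (by rw [phiT_psiT]; exact h1))
      ((phiT_lt_iff hsc).mpr (by rw [phiT_psiT]; exact h2))
  · intro h
    exact ⟨(phiT_lt_iff hsc).mpr h.1,
      fun z h1 h2 => h.2 ((phiT_lt_iff hsc).mp h1) ((phiT_lt_iff hsc).mp h2)⟩

theorem usm_of_split (hsc : SplitCond A) : UpperSemimodular (Tors A) := by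
  intro a b hma hmb
  have h1 : PhiT a ∩ PhiT b ⋖ PhiT a := by
    rw [← phiT_inf]
    exact (phiT_cov_iff hsc).mp hma
  have h2 : PhiT a ∩ PhiT b ⋖ PhiT b := by
    rw [← phiT_inf]
    exact (phiT_cov_iff hsc).mp hmb
  obtain ⟨hu1, hu2⟩ := set_usm h1 h2
  constructor
  · rw [phiT_cov_iff hsc, phiT_sup hsc]
    exact hu1
  · rw [phiT_cov_iff hsc, phiT_sup hsc]
    exact hu2

end Noeth

theorem aop_rings (K : Type) [Field K] (A : Type) [Ring A] [Algebra K A]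
    [FiniteDimensional K A] : IsNoetherianRing Aᵐᵒᵖ ∧ IsArtinianRing Aᵐᵒᵖ := by
  haveI : Module.Finite K Aᵐᵒᵖ :=
    Module.Finite.equiv (MulOpposite.opLinearEquiv K : A ≃ₗ[K] Aᵐᵒᵖ)
  constructor
  · exact isNoetherian_of_tower K (isNoetherian_of_isNoetherianRing_of_finite K Aᵐᵒᵖ)
  · exact IsArtinianRing.of_finite K Aᵐᵒᵖ

end Stmt4Proof

/-- `tors A` is upper semimodular iff every brick in `mod A` is
isomorphic to a simple `A`-module. -/
theorem stmt4 (K A : Type) [Field K] [IsAlgClosed K] [Ring A] [Algebra K A]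
    [FiniteDimensional K A] :
    UpperSemimodular (Tors A) ↔
      (∀ B : ModA A, IsBrick B →
      ∃ S : ModA A, IsSimpleModule Aᵐᵒᵖ S.carrier ∧ Nonempty (B.carrier ≃ₗ[Aᵐᵒᵖ] S.carrier)) := by
  obtain ⟨hn, ha⟩ := Stmt4Proof.aop_rings K A
  haveI := hn
  haveI := ha
  constructor
  · intro husm B hB
    exact ⟨B, Stmt4Proof.simple_of_brick (Stmt4Proof.split_of_usm husm) B hB,
      ⟨LinearEquiv.refl _ _⟩⟩
  · intro hr
    exact Stmt4Proof.usm_of_split (Stmt4Proof.split_of_rhs hr)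
end

section
/- If A is isomorphic as a K-algebra to a product A_1 × ... × A_m of finitely many finite-dimensional local K-algebras, then every brick in mod A is isomorphic to a simple A-module. -/
/-! Preamble: the category `mod A` of finite-dimensional right `A`-modules,
torsion(-free) classes, the complete lattice `tors A`, functorially finite
torsion classes, bricks, etc. -/

open Function

open Polynomial

theorem myIsUnit {M : Type*} [Monoid M] {a y : M} (h1 : a * y = 1) (h2 : y * a = 1) :
    IsUnit a := ⟨⟨a, y, h1, h2⟩, rfl⟩

/-- In a local ring, factors of units are units. -/
theorem locaux_mul {L : Type*} [Ring L] [IsLocalRing L] {a b : L} (h : IsUnit (a * b)) :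
    IsUnit a ∧ IsUnit b := by
  obtain ⟨u, hu⟩ := h
  have key1 : (a * b) * ↑u⁻¹ = 1 := by rw [← hu]; exact u.mul_inv
  have key2 : (↑u⁻¹ : L) * (a * b) = 1 := by rw [← hu]; exact u.inv_mul
  set e : L := b * ↑u⁻¹ * a with he_def
  have he : e * e = e := by
    have h1 : e * e = b * ((↑u⁻¹ * (a * b)) * ↑u⁻¹) * a := by
      rw [he_def]; simp only [mul_assoc]
    rw [h1, key2, one_mul]
  rcases IsLocalRing.isUnit_or_isUnit_of_add_one (a := e) (b := 1 - e) (by noncomm_ring) with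
    hue | hue
  · have he1 : e = 1 := hue.mul_left_cancel (by rw [he, mul_one])
    constructor
    · refine myIsUnit (y := b * ↑u⁻¹) ?_ ?_
      · rw [← mul_assoc]; exact key1
      · exact he1
    · refine myIsUnit (y := (↑u⁻¹ : L) * a) ?_ ?_
      · rw [← mul_assoc]; exact he1
      · rw [mul_assoc]; exact key2
  · have he0 : e = 0 := by
      refine hue.mul_right_cancel ?_
      rw [zero_mul, mul_sub, he, mul_one, sub_self]
    have hu0 : (↑u : L) = 0 := by
      have h2 : a * e * b = (a * b) * ↑u⁻¹ * (a * b) := by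
        rw [he_def]; simp only [mul_assoc]
      rw [key1, one_mul, ← hu] at h2
      rw [← h2, he0, mul_zero, zero_mul]
    have h01 : (0 : L) = 1 := by
      have : IsUnit (0 : L) := hu0 ▸ u.isUnit
      exact isUnit_zero_iff.mp this
    have : Subsingleton L := subsingleton_of_zero_eq_one h01
    exact ⟨(Subsingleton.elim 1 a) ▸ isUnit_one, (Subsingleton.elim 1 b) ▸ isUnit_one⟩

theorem locaux_add {L : Type*} [Ring L] [IsLocalRing L] {a b : L}
    (ha : ¬IsUnit a) (hb : ¬IsUnit b) : ¬IsUnit (a + b) := by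
  intro h
  obtain ⟨u, hu⟩ := h
  have h1 : ↑u⁻¹ * a + ↑u⁻¹ * b = 1 := by rw [← mul_add, ← hu]; exact u.inv_mul
  rcases IsLocalRing.isUnit_or_isUnit_of_add_one h1 with h2 | h2
  · exact ha (locaux_mul h2).2
  · exact hb (locaux_mul h2).2

/-- Polynomial descent: from a vanishing polynomial relation extract `a^s = a^(s+1) * w`. -/
theorem polyaux {K : Type} [Field K] {L : Type} [Ring L] [Algebra K L] (a : L) :
    ∀ (n : ℕ) (p : K[X]), p.natDegree ≤ n → p ≠ 0 →
      ∀ k : ℕ, a ^ k * (aeval a p) = 0 →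
        ∃ (s : ℕ) (w : L), a * w = w * a ∧ a ^ s = a ^ (s + 1) * w := by
  have hcomm : ∀ q : K[X], a * (aeval a q) = (aeval a q) * a := by
    intro q
    have : aeval a (X * q) = aeval a (q * X) := by rw [mul_comm]
    simpa [map_mul] using this
  intro n
  induction n with
  | zero =>
    intro p hdeg hp k hk
    obtain ⟨c, rfl⟩ := Polynomial.natDegree_eq_zero.mp (Nat.le_zero.mp hdeg)
    have hc : c ≠ 0 := fun h => hp (by rw [h, map_zero])
    have h0 : c • a ^ k = 0 := by
      rw [Algebra.smul_def]
      rw [aeval_C, ← Algebra.commutes c (a ^ k)] at hk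
      exact hk
    have : a ^ k = 0 := by
      have := congrArg (fun x => c⁻¹ • x) h0
      simpa [smul_smul, inv_mul_cancel₀ hc] using this
    exact ⟨k, 0, by simp, by rw [this, mul_zero]⟩
  | succ n ih =>
    intro p hdeg hp k hk
    set D : L := aeval a p.divX with hD
    have haD : a * D = D * a := hcomm _
    have hsplit : D * a + algebraMap K L (p.coeff 0) = aeval a p := by
      have := congrArg (aeval a) (Polynomial.divX_mul_X_add p)
      simpa [map_add, map_mul, aeval_X, aeval_C] using this
    by_cases hc : p.coeff 0 = 0
    · -- recurse
      have hdivX : p.divX ≠ 0 := by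
        intro h0
        apply hp
        have := Polynomial.divX_mul_X_add p
        rw [h0, hc] at this
        simpa using this.symm
      have hdeg' : p.divX.natDegree ≤ n := by
        have h1 : p.divX.natDegree = p.natDegree - 1 :=
          Polynomial.natDegree_divX_eq_natDegree_tsub_one
        omega
      refine ih p.divX hdeg' hdivX (k + 1) ?_
      have hDa : D * a = aeval a p := by
        rw [hc] at hsplit; simpa using hsplit
      have h5 : a ^ k * (D * a) = 0 := by rw [hDa]; exact hk
      calc a ^ (k + 1) * D = a ^ k * (a * D) := by rw [pow_succ, mul_assoc]
        _ = a ^ k * (D * a) := by rw [haD]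
        _ = 0 := h5
    · -- extract
      have heq : a ^ k * (D * a) + (p.coeff 0) • a ^ k = 0 := by
        have h1 : a ^ k * (D * a + algebraMap K L (p.coeff 0)) = 0 := by rw [hsplit]; exact hk
        rw [mul_add] at h1
        rw [Algebra.smul_def, Algebra.commutes]
        exact h1
      refine ⟨k, (p.coeff 0)⁻¹ • (-D), ?_, ?_⟩
      · rw [mul_smul_comm, smul_mul_assoc, mul_neg, neg_mul, haD]
      · have h2 : (p.coeff 0) • a ^ k = -(a ^ (k + 1) * D) := by
          have h4 : a ^ (k + 1) * D = a ^ k * (D * a) := by rw [pow_succ, mul_assoc, haD]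
          rw [h4]
          exact eq_neg_of_add_eq_zero_right heq
        have h3 : a ^ k = (p.coeff 0)⁻¹ • -(a ^ (k + 1) * D) := by
          rw [← h2, smul_smul, inv_mul_cancel₀ hc, one_smul]
        rw [h3, mul_smul_comm, mul_neg]

/-- Every non-unit of a finite-dimensional local algebra is nilpotent. -/
theorem locaux_nil {K : Type} [Field K] {L : Type} [Ring L] [Algebra K L]
    [FiniteDimensional K L] [IsLocalRing L] {a : L} (ha : ¬IsUnit a) :
    ∃ n : ℕ, a ^ n = 0 := by
  have hint : IsIntegral K a := Algebra.IsIntegral.isIntegral a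
  obtain ⟨s, w, hcomm, hs⟩ :=
    polyaux a (minpoly K a).natDegree (minpoly K a) le_rfl (minpoly.ne_zero hint) 0
      (by rw [pow_zero, one_mul, minpoly.aeval])
  -- s = 0 : a is a unit, contradiction
  rcases Nat.eq_zero_or_pos s with rfl | hspos
  · exfalso
    apply ha
    rw [pow_zero, zero_add, pow_one] at hs
    exact myIsUnit hs.symm (by rw [← hcomm]; exact hs.symm)
  -- powers: a ^ s = a ^ (s + j) * w ^ j
  have hCaw : Commute a w := hcomm
  have hpow : ∀ j : ℕ, a ^ s = a ^ (s + j) * w ^ j := by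
    intro j
    induction j with
    | zero => rw [Nat.add_zero, pow_zero, mul_one]
    | succ j ihj =>
      have shuffle : a ^ (s + (j + 1)) * w ^ (j + 1) = (a ^ (s + j) * w ^ j) * (a * w) := by
        have c1 : Commute (w ^ j) a := (hCaw.symm.pow_left j)
        calc a ^ (s + (j + 1)) * w ^ (j + 1)
            = (a ^ (s + j) * a) * (w ^ j * w) := by
              rw [← pow_succ, ← pow_succ]; rfl
          _ = a ^ (s + j) * (a * w ^ j) * w := by simp only [mul_assoc]
          _ = a ^ (s + j) * (w ^ j * a) * w := by rw [c1.eq]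
          _ = (a ^ (s + j) * w ^ j) * (a * w) := by simp only [mul_assoc]
      rw [shuffle, ← ihj, ← mul_assoc, ← pow_succ, ← hs]
  set e : L := a ^ s * w ^ s with he_def
  have hea : e * a ^ s = a ^ s := by
    have c1 : Commute (w ^ s) (a ^ s) := hCaw.symm.pow_pow s s
    calc e * a ^ s = a ^ s * (w ^ s * a ^ s) := by rw [he_def, mul_assoc]
      _ = a ^ s * (a ^ s * w ^ s) := by rw [c1.eq]
      _ = a ^ (s + s) * w ^ s := by rw [← mul_assoc, ← pow_add]
      _ = a ^ s := (hpow s).symm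
  have he : e * e = e := by
    calc e * e = (e * a ^ s) * w ^ s := by rw [he_def]; simp only [mul_assoc]
      _ = a ^ s * w ^ s := by rw [hea]
      _ = e := he_def.symm
  rcases IsLocalRing.isUnit_or_isUnit_of_add_one (a := e) (b := 1 - e) (by noncomm_ring) with
    hue | hue
  · exfalso
    apply ha
    have he1 : e = 1 := hue.mul_left_cancel (by rw [he, mul_one])
    obtain ⟨s', rfl⟩ : ∃ s', s = s' + 1 := ⟨s - 1, by omega⟩
    -- a * (a ^ s' * w ^ (s' + 1)) = 1 and conversely
    have h1 : a * (a ^ s' * w ^ (s' + 1)) = 1 := by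
      rw [← mul_assoc, ← pow_succ']
      exact he1
    have h2 : (a ^ s' * w ^ (s' + 1)) * a = 1 := by
      have c1 : Commute (w ^ (s' + 1)) a := hCaw.symm.pow_left _
      calc (a ^ s' * w ^ (s' + 1)) * a = a ^ s' * (w ^ (s' + 1) * a) := by rw [mul_assoc]
        _ = a ^ s' * (a * w ^ (s' + 1)) := by rw [c1.eq]
        _ = a * (a ^ s' * w ^ (s' + 1)) := by
            rw [← mul_assoc, ← mul_assoc, ← pow_succ, ← pow_succ']
        _ = 1 := h1
    exact myIsUnit h1 h2
  · have he0 : e = 0 := by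
      refine hue.mul_right_cancel ?_
      rw [zero_mul, mul_sub, he, mul_one, sub_self]
    exact ⟨s, by rw [← hea, he0, zero_mul]⟩

theorem listaux {L : Type*} [Monoid L] :
    ∀ l : List L, (∀ y ∈ l, IsUnit y) → IsUnit l.prod := by
  intro l
  induction l with
  | nil => simp
  | cons x xs ih =>
    intro h
    rw [List.prod_cons]
    exact (h x List.mem_cons_self).mul (ih fun y hy => h y (List.mem_cons_of_mem x hy))

/-- Over an algebraically closed field, every element of a finite-dimensional algebra
has a scalar shift that is not a unit. -/
theorem locaux_shift {K : Type} [Field K] [IsAlgClosed K] {L : Type} [Ring L] [Nontrivial L]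
    [Algebra K L] [FiniteDimensional K L] (a : L) :
    ∃ l : K, ¬IsUnit (a - algebraMap K L l) := by
  have hint : IsIntegral K a := Algebra.IsIntegral.isIntegral a
  set p := minpoly K a with hp
  have hmonic : p.Monic := minpoly.monic hint
  have hsplits : p.Splits := IsAlgClosed.splits p
  have heq : p = (p.roots.map fun l => Polynomial.X - Polynomial.C l).prod :=
    hsplits.eq_prod_roots_of_monic hmonic
  set Lr : List K := p.roots.toList with hLr
  have hLrm : (Lr : Multiset K) = p.roots := Multiset.coe_toList _
  have heq2 : p = (Lr.map fun l => Polynomial.X - Polynomial.C l).prod := by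
    rw [heq, ← hLrm, Multiset.map_coe, Multiset.prod_coe]
  have h0 : (Lr.map fun l => a - algebraMap K L l).prod = 0 := by
    have h1 := minpoly.aeval K a
    rw [← hp, heq2, map_list_prod, List.map_map] at h1
    simpa [Function.comp_def, map_sub, Polynomial.aeval_X, Polynomial.aeval_C] using h1
  by_contra hcon
  push_neg at hcon
  have : IsUnit ((Lr.map fun l => a - algebraMap K L l).prod) := by
    apply listaux
    intro y hy
    obtain ⟨l, _, rfl⟩ := List.mem_map.mp hy
    exact hcon l
  rw [h0] at this
  exact zero_ne_one (isUnit_zero_iff.mp this)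

/-- if `A` is isomorphic as a `K`-algebra to a finite product of
finite-dimensional local `K`-algebras, then every brick in `mod A` is isomorphic to a
simple `A`-module. -/
theorem stmt6 (K A : Type) [Field K] [IsAlgClosed K] [Ring A] [Algebra K A]
    [FiniteDimensional K A]
    (h : Nonempty (LocalAlgebraFactorization K A)) :
    ∀ B : ModA A, IsBrick B →
      ∃ S : ModA A, IsSimpleModule Aᵐᵒᵖ S.carrier ∧ Nonempty (B.carrier ≃ₗ[Aᵐᵒᵖ] S.carrier) := by
  obtain ⟨F⟩ := h
  intro Bm hB
  obtain ⟨hnt, hbij⟩ := hB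
  by_cases hsimp : IsSimpleModule Aᵐᵒᵖ Bm.carrier
  · exact ⟨Bm, hsimp, ⟨LinearEquiv.refl _ _⟩⟩
  exfalso
  letI : ∀ i, Ring (F.B i) := F.ringB
  letI : ∀ i, Algebra K (F.B i) := F.algB
  haveI : ∀ i, FiniteDimensional K (F.B i) := F.finB
  haveI : ∀ i, IsLocalRing (F.B i) := F.localB
  haveI hntB : Nontrivial Bm.carrier := hnt
  -- K-module structure on Bm.carrier
  letI : Module K Bm.carrier := Module.compHom Bm.carrier (algebraMap K Aᵐᵒᵖ)
  haveI : IsScalarTower K Aᵐᵒᵖ Bm.carrier :=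
    ⟨fun k a b => by rw [Algebra.smul_def, mul_smul]; rfl⟩
  haveI : Module.Finite K Aᵐᵒᵖ :=
    Module.Finite.equiv (MulOpposite.opLinearEquiv K : A ≃ₗ[K] Aᵐᵒᵖ)
  haveI : Module.Finite K Bm.carrier := Module.Finite.trans Aᵐᵒᵖ Bm.carrier
  haveI hNoeK : IsNoetherian K Bm.carrier := inferInstance
  haveI hArtK : IsArtinian K Bm.carrier := inferInstance
  haveI hNoe : IsNoetherian Aᵐᵒᵖ Bm.carrier := isNoetherian_of_tower K hNoeK
  haveI hArt : IsArtinian Aᵐᵒᵖ Bm.carrier := isArtinian_of_tower K hArtK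
  -- the idempotents
  set e : Fin F.m → A := fun i => F.equiv.symm (Pi.single i (1 : F.B i)) with he_def
  have he_img : ∀ i, F.equiv (e i) = Pi.single i (1 : F.B i) := fun i =>
    F.equiv.apply_symm_apply _
  have he_mul : ∀ i, e i * e i = e i := by
    intro i
    apply F.equiv.injective
    rw [map_mul, he_img]
    funext j
    rcases eq_or_ne j i with rfl | hne
    · simp [Pi.mul_apply, Pi.single_eq_same]
    · simp [Pi.mul_apply, Pi.single_eq_of_ne hne]
  have he_central : ∀ i (a : A), e i * a = a * e i := by
    intro i a
    apply F.equiv.injective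
    rw [map_mul, map_mul, he_img]
    funext j
    rcases eq_or_ne j i with rfl | hne
    · simp [Pi.mul_apply, Pi.single_eq_same]
    · simp [Pi.mul_apply, Pi.single_eq_of_ne hne]
  have he_sum : ∑ i, e i = 1 := by
    apply F.equiv.injective
    rw [map_sum, map_one]
    funext j
    rw [Finset.sum_apply]
    simp only [he_img]
    rw [Pi.one_apply]
    rw [Finset.sum_eq_single j]
    · rw [Pi.single_eq_same]
    · intro i _ hij
      exact Pi.single_eq_of_ne (Ne.symm hij) _
    · intro hj
      exact absurd (Finset.mem_univ j) hj
  -- every idempotent acts as zero or one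
  have hzo : ∀ i, (∀ b : Bm.carrier, (MulOpposite.op (e i)) • b = 0) ∨
      (∀ b : Bm.carrier, (MulOpposite.op (e i)) • b = b) := by
    intro i
    set f : Bm.carrier →ₗ[Aᵐᵒᵖ] Bm.carrier :=
      { toFun := fun b => (MulOpposite.op (e i)) • b
        map_add' := fun y z => smul_add _ y z
        map_smul' := fun r y => by
          show (MulOpposite.op (e i)) • (r • y) = r • ((MulOpposite.op (e i)) • y)
          rw [← mul_smul, ← mul_smul]
          congr 1
          calc MulOpposite.op (e i) * r
              = MulOpposite.op (r.unop * e i) := by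
                rw [MulOpposite.op_mul, MulOpposite.op_unop]
            _ = MulOpposite.op (e i * r.unop) := by rw [he_central]
            _ = r * MulOpposite.op (e i) := by
                rw [MulOpposite.op_mul, MulOpposite.op_unop] } with hf_def
    by_cases hf0 : f = 0
    · left
      intro b
      exact DFunLike.congr_fun hf0 b
    · right
      have hbf := hbij f hf0
      intro b
      apply hbf.injective
      show (MulOpposite.op (e i)) • ((MulOpposite.op (e i)) • b) = (MulOpposite.op (e i)) • b
      rw [← mul_smul, ← MulOpposite.op_mul, he_mul]
  have hex : ∃ i, ∀ b : Bm.carrier, (MulOpposite.op (e i)) • b = b := by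
    by_contra hcon
    push_neg at hcon
    have hall : ∀ b : Bm.carrier, b = 0 := by
      intro b
      have h1 : ((1 : Aᵐᵒᵖ)) • b = b := one_smul _ b
      have h2 : (1 : Aᵐᵒᵖ) = ∑ i, MulOpposite.op (e i) := by
        rw [← Finset.op_sum, he_sum, MulOpposite.op_one]
      rw [h2, Finset.sum_smul] at h1
      rw [← h1]
      apply Finset.sum_eq_zero
      intro i _
      rcases hzo i with hz | ho
      · exact hz b
      · obtain ⟨b', hb'⟩ := hcon i
        exact absurd (ho b') hb'
    obtain ⟨y, z, hyz⟩ := hntB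
    exact hyz ((hall y).trans (hall z).symm)
  obtain ⟨i, hu⟩ := hex
  -- the component map
  set cmp : Aᵐᵒᵖ → F.B i := fun r => F.equiv r.unop i with hcmp
  have cmp_mul : ∀ r s : Aᵐᵒᵖ, cmp (r * s) = cmp s * cmp r := by
    intro r s
    show F.equiv (r * s).unop i = _
    rw [MulOpposite.unop_mul, map_mul]
    rfl
  have cmp_sub : ∀ r s : Aᵐᵒᵖ, cmp (r - s) = cmp r - cmp s := by
    intro r s
    show F.equiv (r - s).unop i = _
    rw [MulOpposite.unop_sub, map_sub]
    rfl
  have cmp_alg : ∀ l : K, cmp (algebraMap K Aᵐᵒᵖ l) = algebraMap K (F.B i) l := by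
    intro l
    show F.equiv (algebraMap K Aᵐᵒᵖ l).unop i = _
    rw [MulOpposite.algebraMap_apply, MulOpposite.unop_op, AlgEquiv.commutes]
    rfl
  have cmp_one : cmp 1 = 1 := by
    show F.equiv (1 : Aᵐᵒᵖ).unop i = 1
    rw [MulOpposite.unop_one, map_one]
    rfl
  have cmp_zero : cmp 0 = 0 := by
    show F.equiv (0 : Aᵐᵒᵖ).unop i = 0
    rw [MulOpposite.unop_zero, map_zero]
    rfl
  have cmp_pow : ∀ (r : Aᵐᵒᵖ) (n : ℕ), cmp (r ^ n) = (cmp r) ^ n := by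
    intro r n
    induction n with
    | zero => rw [pow_zero, pow_zero, cmp_one]
    | succ n ih => rw [pow_succ, cmp_mul, ih, ← pow_succ']
  -- annihilation
  have hann : ∀ r : Aᵐᵒᵖ, cmp r = 0 → ∀ b : Bm.carrier, r • b = 0 := by
    intro r hr b
    have h1 : e i * r.unop = 0 := by
      apply F.equiv.injective
      rw [map_mul, he_img, map_zero]
      funext j
      rcases eq_or_ne j i with rfl | hne
      · rw [Pi.mul_apply, Pi.single_eq_same, one_mul]
        exact hr
      · rw [Pi.mul_apply, Pi.single_eq_of_ne hne, zero_mul]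
        rfl
    have h2 : r * MulOpposite.op (e i) = 0 := by
      calc r * MulOpposite.op (e i) = MulOpposite.op (e i * r.unop) := by
            rw [MulOpposite.op_mul, MulOpposite.op_unop]
        _ = 0 := by rw [h1, MulOpposite.op_zero]
    conv_lhs => rw [← hu b]
    rw [← mul_smul, h2, zero_smul]
  -- the "maximal ideal" set
  set mm : Set Aᵐᵒᵖ := {r | ¬IsUnit (cmp r)} with hmm_def
  have hmm_zero : (0 : Aᵐᵒᵖ) ∈ mm := by
    show ¬IsUnit (cmp 0)
    rw [cmp_zero, isUnit_zero_iff]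
    exact fun h01 => zero_ne_one h01
  have hmm_add : ∀ a b : Aᵐᵒᵖ, a ∈ mm → b ∈ mm → a + b ∈ mm := by
    intro a b ha hb
    show ¬IsUnit (cmp (a + b))
    have : cmp (a + b) = cmp a + cmp b := by
      show F.equiv (a + b).unop i = _
      rw [MulOpposite.unop_add, map_add]
      rfl
    rw [this]
    have ha' : ¬IsUnit (cmp a) := ha
    have hb' : ¬IsUnit (cmp b) := hb
    exact locaux_add ha' hb'
  have hmm_mulL : ∀ (r a : Aᵐᵒᵖ), a ∈ mm → r * a ∈ mm := by
    intro r a ha hcontra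
    rw [cmp_mul] at hcontra
    exact ha (locaux_mul hcontra).1
  have hmm_nilp : ∀ a ∈ mm, ∃ n, ∀ b : Bm.carrier, (a ^ n) • b = 0 := by
    intro a ha
    have ha' : ¬IsUnit (cmp a) := ha
    obtain ⟨n, hn⟩ := locaux_nil (K := K) ha'
    exact ⟨n, fun b => hann _ (by rw [cmp_pow, hn]) b⟩
  have hmm_shift : ∀ r : Aᵐᵒᵖ, ∃ (l : K) (nn : Aᵐᵒᵖ),
      nn ∈ mm ∧ r = algebraMap K Aᵐᵒᵖ l + nn := by
    intro r
    obtain ⟨l, hl⟩ := locaux_shift (K := K) (cmp r)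
    refine ⟨l, r - algebraMap K Aᵐᵒᵖ l, ?_, by abel⟩
    show ¬IsUnit (cmp (r - algebraMap K Aᵐᵒᵖ l))
    rwa [cmp_sub, cmp_alg]
  -- smul commutation
  have hsc : ∀ (r : Aᵐᵒᵖ) (l : K) (b : Bm.carrier), r • (l • b) = l • (r • b) := by
    intro r l b
    have hcomm : r * algebraMap K Aᵐᵒᵖ l = algebraMap K Aᵐᵒᵖ l * r := (Algebra.commutes l r).symm
    rw [← algebraMap_smul (R := K) Aᵐᵒᵖ l b, ← mul_smul, hcomm, mul_smul,
      algebraMap_smul]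
  -- an atom gives a socle element
  haveI : IsAtomic (Submodule Aᵐᵒᵖ Bm.carrier) :=
    isAtomic_of_orderBot_wellFounded_lt wellFounded_lt
  haveI : IsCoatomic (Submodule Aᵐᵒᵖ Bm.carrier) :=
    isCoatomic_of_orderTop_gt_wellFounded wellFounded_gt
  have hbot_ne_top : (⊥ : Submodule Aᵐᵒᵖ Bm.carrier) ≠ ⊤ := bot_ne_top
  obtain ⟨W, hW_atom, -⟩ :=
    (IsAtomic.eq_bot_or_exists_atom_le (⊤ : Submodule Aᵐᵒᵖ Bm.carrier)).resolve_left
      (Ne.symm hbot_ne_top)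
  obtain ⟨x, hxW, hx0⟩ := W.ne_bot_iff.mp hW_atom.1
  have hx_kill : ∀ a ∈ mm, a • x = (0 : Bm.carrier) := by
    by_contra hcon
    push_neg at hcon
    obtain ⟨a, ham, hax⟩ := hcon
    set Sx : Submodule Aᵐᵒᵖ Bm.carrier :=
      { carrier := {y | ∃ c ∈ mm, y = c • x}
        add_mem' := by
          rintro y z ⟨c1, hc1, rfl⟩ ⟨c2, hc2, rfl⟩
          exact ⟨c1 + c2, hmm_add c1 c2 hc1 hc2, (add_smul c1 c2 x).symm⟩
        zero_mem' := ⟨0, hmm_zero, (zero_smul _ x).symm⟩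
        smul_mem' := by
          rintro r y ⟨c, hc, rfl⟩
          exact ⟨r * c, hmm_mulL r c hc, (mul_smul r c x).symm⟩ } with hSx_def
    have hle : Sx ≤ W := by
      rintro y ⟨c, hc, rfl⟩
      exact W.smul_mem c hxW
    have hne : Sx ≠ ⊥ := by
      intro h0
      apply hax
      have hmem : (a • x) ∈ Sx := ⟨a, ham, rfl⟩
      rw [h0] at hmem
      exact (Submodule.mem_bot _).mp hmem
    have hSxW : Sx = W := by
      rcases hle.lt_or_eq with hlt | heq
      · exact absurd (hW_atom.2 Sx hlt) hne
      · exact heq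
    have hxSx : x ∈ Sx := by rw [hSxW]; exact hxW
    obtain ⟨c, hc, hxc⟩ := hxSx
    obtain ⟨n, hn⟩ := hmm_nilp c hc
    have hiter : ∀ j : ℕ, c ^ j • x = x := by
      intro j
      induction j with
      | zero => rw [pow_zero, one_smul]
      | succ j ihj => rw [pow_succ, mul_smul, ← hxc, ihj]
    exact hx0 (by rw [← hiter n]; exact hn x)
  -- a proper nonzero submodule
  have hex_U : ∃ U : Submodule Aᵐᵒᵖ Bm.carrier, U ≠ ⊥ ∧ U ≠ ⊤ := by
    by_contra hcon
    push_neg at hcon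
    apply hsimp
    haveI : Nontrivial (Submodule Aᵐᵒᵖ Bm.carrier) := ⟨⊥, ⊤, hbot_ne_top⟩
    exact { eq_bot_or_eq_top := fun U => or_iff_not_imp_left.mpr (hcon U) }
  obtain ⟨U, hU0, hUtop⟩ := hex_U
  obtain ⟨N, hN_coatom, hUN⟩ := (eq_top_or_exists_le_coatom U).resolve_left hUtop
  have hT_simple : IsSimpleModule Aᵐᵒᵖ (Bm.carrier ⧸ N) := isSimpleModule_iff_isCoatom.mpr hN_coatom
  -- mm kills the simple quotient
  have hq_kill : ∀ a ∈ mm, ∀ t : Bm.carrier ⧸ N, a • t = 0 := by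
    intro a ham t
    by_contra hat
    set St : Submodule Aᵐᵒᵖ (Bm.carrier ⧸ N) :=
      { carrier := {y | ∃ c ∈ mm, y = c • t}
        add_mem' := by
          rintro y z ⟨c1, hc1, rfl⟩ ⟨c2, hc2, rfl⟩
          exact ⟨c1 + c2, hmm_add c1 c2 hc1 hc2, (add_smul c1 c2 t).symm⟩
        zero_mem' := ⟨0, hmm_zero, (zero_smul _ t).symm⟩
        smul_mem' := by
          rintro r y ⟨c, hc, rfl⟩
          exact ⟨r * c, hmm_mulL r c hc, (mul_smul r c t).symm⟩ } with hSt_def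
    have hne : St ≠ ⊥ := by
      intro h0
      apply hat
      have hmem : (a • t) ∈ St := ⟨a, ham, rfl⟩
      rw [h0] at hmem
      exact (Submodule.mem_bot _).mp hmem
    have hSt : St = ⊤ := by
      rcases hT_simple.eq_bot_or_eq_top St with h0 | h1
      · exact absurd h0 hne
      · exact h1
    have htSt : t ∈ St := by rw [hSt]; exact Submodule.mem_top
    obtain ⟨c, hc, htc⟩ := htSt
    obtain ⟨n, hn⟩ := hmm_nilp c hc
    have hiter : ∀ j : ℕ, c ^ j • t = t := by
      intro j
      induction j with
      | zero => rw [pow_zero, one_smul]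
      | succ j ihj => rw [pow_succ, mul_smul, ← htc, ihj]
    have hzero : c ^ n • t = 0 := by
      obtain ⟨b, rfl⟩ := Submodule.Quotient.mk_surjective N t
      rw [← Submodule.Quotient.mk_smul, hn b, Submodule.Quotient.mk_zero]
    have ht0 : t = 0 := by rw [← hiter n, hzero]
    exact hat (by rw [ht0, smul_zero])
  have hmN : ∀ a ∈ mm, ∀ b : Bm.carrier, a • b ∈ N := by
    intro a ham b
    have h1 := hq_kill a ham (Submodule.Quotient.mk b)
    rwa [← Submodule.Quotient.mk_smul, Submodule.Quotient.mk_eq_zero] at h1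
  -- a K-linear functional vanishing on N
  set NK : Submodule K Bm.carrier := N.restrictScalars K with hNK_def
  have hNKtop : NK ≠ ⊤ := by
    intro h0
    apply hN_coatom.1
    rw [eq_top_iff]
    intro b _
    have hb : b ∈ NK := by rw [h0]; exact Submodule.mem_top
    exact hb
  haveI : Nontrivial (Bm.carrier ⧸ NK) :=
    Submodule.Quotient.nontrivial_iff.mpr hNKtop
  set bas := Module.Basis.ofVectorSpace K (Bm.carrier ⧸ NK) with hbas_def
  obtain ⟨j0⟩ := bas.index_nonempty
  set c0 : (Bm.carrier ⧸ NK) →ₗ[K] K := bas.coord j0 with hc0_def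
  set cf : Bm.carrier → K := fun b => c0 (Submodule.Quotient.mk b) with hcf_def
  obtain ⟨b0, hb0⟩ : ∃ b0 : Bm.carrier, cf b0 = 1 := by
    obtain ⟨b0, hb0⟩ := Submodule.Quotient.mk_surjective NK (bas j0)
    refine ⟨b0, ?_⟩
    show c0 (Submodule.Quotient.mk b0) = 1
    rw [hb0, hc0_def]
    simp [Module.Basis.coord_apply]
  have cf_add : ∀ b1 b2, cf (b1 + b2) = cf b1 + cf b2 := by
    intro b1 b2
    show c0 (Submodule.Quotient.mk (b1 + b2)) = _
    rw [Submodule.Quotient.mk_add, map_add]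
  have cf_smulK : ∀ (l : K) b, cf (l • b) = l * cf b := by
    intro l b
    show c0 (Submodule.Quotient.mk (l • b)) = _
    rw [Submodule.Quotient.mk_smul, map_smul, smul_eq_mul]
  have cf_N : ∀ b ∈ N, cf b = 0 := by
    intro b hb
    show c0 (Submodule.Quotient.mk b) = 0
    rw [(Submodule.Quotient.mk_eq_zero NK).mpr ((Submodule.restrictScalars_mem K N b).mpr hb),
      map_zero]
  -- the contradiction endomorphism
  set f : Bm.carrier →ₗ[Aᵐᵒᵖ] Bm.carrier :=
    { toFun := fun b => cf b • x
      map_add' := fun b1 b2 => by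
        show cf (b1 + b2) • x = cf b1 • x + cf b2 • x
        rw [cf_add, add_smul]
      map_smul' := fun a b => by
        show cf (a • b) • x = a • (cf b • x)
        obtain ⟨l, nn, hnn, rfl⟩ := hmm_shift a
        have h1 : (algebraMap K Aᵐᵒᵖ l + nn) • b = l • b + nn • b := by
          rw [add_smul, algebraMap_smul]
        have h2 : cf ((algebraMap K Aᵐᵒᵖ l + nn) • b) = l * cf b := by
          rw [h1, cf_add, cf_smulK, cf_N _ (hmN nn hnn b), add_zero]
        have h4 : (algebraMap K Aᵐᵒᵖ l + nn) • x = l • x := by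
          rw [add_smul, algebraMap_smul, hx_kill nn hnn, add_zero]
        rw [h2, hsc, h4, smul_smul, mul_comm] } with hf_def
  have hf0 : f ≠ 0 := by
    intro h0
    have h1 : f b0 = 0 := by rw [h0]; rfl
    have h2 : f b0 = x := by
      show cf b0 • x = x
      rw [hb0, one_smul]
    exact hx0 (h2 ▸ h1)
  have hbf := hbij f hf0
  obtain ⟨u0, hu0U, hu0ne⟩ := U.ne_bot_iff.mp hU0
  apply hu0ne
  apply hbf.injective
  rw [map_zero]
  show cf u0 • x = 0
  rw [cf_N u0 (hUN hu0U), zero_smul]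
end

section
/- The map sending a brick B to T(B), the smallest torsion class containing B, induces a bijection from the set of isomorphism classes of bricks in mod A to the set of completely join irreducible elements of the complete lattice tors A. -/
/-! Preamble: the category `mod A` of finite-dimensional right `A`-modules,
torsion(-free) classes, the complete lattice `tors A`, functorially finite
torsion classes, bricks, etc. -/

open Function

section AuxProofs

open Submodule LinearMap

variable {A : Type} [Ring A]

theorem ModAaux.map_eq_zero_of_subsingleton {M N : ModA A} (h : Subsingleton M.carrier)
    (f : M.carrier →ₗ[Aᵐᵒᵖ] N.carrier) : f = 0 := by
  ext x
  rw [Subsingleton.elim x 0, map_zero]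
  rfl

theorem ModAaux.id_ne_zero {B : ModA A} (h : Nontrivial B.carrier) :
    (LinearMap.id : B.carrier →ₗ[Aᵐᵒᵖ] B.carrier) ≠ 0 := by
  intro h0
  obtain ⟨x, y, hxy⟩ := h
  apply hxy
  have hx : x = 0 := by
    have := congrArg (fun g : B.carrier →ₗ[Aᵐᵒᵖ] B.carrier => g x) h0
    simpa using this
  have hy : y = 0 := by
    have := congrArg (fun g : B.carrier →ₗ[Aᵐᵒᵖ] B.carrier => g y) h0
    simpa using this
  rw [hx, hy]

theorem ModAaux.mem_of_le {T T' : Tors A} (h : T ≤ T') {M : ModA A} (hM : M ∈ T.1) :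
    M ∈ T'.1 := h hM

theorem ModAaux.mem_of_surj (T : Tors A) {M N : ModA A} (hM : M ∈ T.1)
    (f : M.carrier →ₗ[Aᵐᵒᵖ] N.carrier) (hf : Function.Surjective f) : N ∈ T.1 :=
  T.2.2.1 M N hM f hf

theorem ModAaux.mem_torsGen {C : Set (ModA A)} {B : ModA A} (h : B ∈ C) :
    B ∈ (torsGen C).1 := by
  refine Set.mem_sInter.2 ?_
  rintro _ ⟨T, hT, rfl⟩
  exact hT h

theorem ModAaux.torsGen_le {C : Set (ModA A)} {T : Tors A} (h : C ⊆ T.1) :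
    torsGen C ≤ T := sInf_le h

theorem ModAaux.le_of_mem {T : Tors A} {B : ModA A} (h : B ∈ T.1) :
    torsGen {B} ≤ T := ModAaux.torsGen_le (Set.singleton_subset_iff.2 h)

theorem ModAaux.isTorsionClass_leftPerp (X : Set (ModA A)) :
    IsTorsionClass (leftPerp X) := by
  refine ⟨fun N hN M hM f => ModAaux.map_eq_zero_of_subsingleton hN f, ?_, ?_⟩
  · intro M N hM f hf P hP g
    have h0 : g ∘ₗ f = 0 := hM P hP _
    ext y
    obtain ⟨x, rfl⟩ := hf y
    have := congrArg (fun h : M.carrier →ₗ[Aᵐᵒᵖ] P.carrier => h x) h0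
    simpa using this
  · intro X' Y Z f g hf hg he hX hZ P hP h
    have h1 : h ∘ₗ f = 0 := hX P hP _
    have hle : LinearMap.ker g ≤ LinearMap.ker h := by
      rw [← he]
      rintro _ ⟨x, rfl⟩
      have := congrArg (fun u : X'.carrier →ₗ[Aᵐᵒᵖ] P.carrier => u x) h1
      simpa [LinearMap.mem_ker] using this
    -- induced iso (Y ⧸ ker g) ≃ Z
    have hle2 : LinearMap.range f ≤ LinearMap.ker g := le_of_eq he
    set gbar : (Y.carrier ⧸ LinearMap.range f) →ₗ[Aᵐᵒᵖ] Z.carrier :=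
      (LinearMap.range f).liftQ g (le_of_eq he) with hgbar
    have hgbar_inj : Function.Injective gbar := by
      rw [← LinearMap.ker_eq_bot]
      exact Submodule.ker_liftQ_eq_bot _ _ _ (le_of_eq he.symm)
    have hgbar_surj : Function.Surjective gbar := by
      intro z
      obtain ⟨y, rfl⟩ := hg z
      exact ⟨Submodule.Quotient.mk y, Submodule.liftQ_apply _ _ _⟩
    set e : (Y.carrier ⧸ LinearMap.range f) ≃ₗ[Aᵐᵒᵖ] Z.carrier :=
      LinearEquiv.ofBijective gbar ⟨hgbar_inj, hgbar_surj⟩ with he'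
    have hrle : LinearMap.range f ≤ LinearMap.ker h := by
      rintro _ ⟨x, rfl⟩
      have := congrArg (fun u : X'.carrier →ₗ[Aᵐᵒᵖ] P.carrier => u x) h1
      simpa [LinearMap.mem_ker] using this
    set htilde : (Y.carrier ⧸ LinearMap.range f) →ₗ[Aᵐᵒᵖ] P.carrier :=
      (LinearMap.range f).liftQ h hrle with hht
    set φ : Z.carrier →ₗ[Aᵐᵒᵖ] P.carrier := htilde ∘ₗ (e.symm : Z.carrier →ₗ[Aᵐᵒᵖ] _) with hφ
    have hφ0 : φ = 0 := hZ P hP φ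
    ext y
    have hsymm : e.symm (g y) = Submodule.Quotient.mk y := by
      apply e.injective
      rw [LinearEquiv.apply_symm_apply]
      show g y = gbar (Submodule.Quotient.mk y)
      rw [Submodule.liftQ_apply]
    have : h y = φ (g y) := by
      rw [hφ]
      simp only [LinearMap.coe_comp, Function.comp_apply, LinearEquiv.coe_coe, hsymm]
      rw [hht, Submodule.liftQ_apply]
    rw [this, hφ0]
    rfl

theorem ModAaux.isTorsionClass_inter {X Y : Set (ModA A)} (hX : IsTorsionClass X)
    (hY : IsTorsionClass Y) : IsTorsionClass (X ∩ Y) := by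
  refine ⟨fun N hN => ⟨hX.1 N hN, hY.1 N hN⟩, ?_, ?_⟩
  · intro M N hM f hf
    exact ⟨hX.2.1 M N hM.1 f hf, hY.2.1 M N hM.2 f hf⟩
  · intro X' Y' Z' f g hf hg he h1 h2
    exact ⟨hX.2.2 X' Y' Z' f g hf hg he h1.1 h2.1, hY.2.2 X' Y' Z' f g hf hg he h1.2 h2.2⟩

theorem ModAaux.exists_nonzero_hom {C : Set (ModA A)} {M : ModA A}
    (hM : M ∈ (torsGen C).1) (hnt : Nontrivial M.carrier) :
    ∃ B ∈ C, ∃ f : B.carrier →ₗ[Aᵐᵒᵖ] M.carrier, f ≠ 0 := by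
  by_contra hcon
  push_neg at hcon
  have hMperp : M ∈ rightPerp C := fun N hN f => hcon N hN f
  have hCW : C ⊆ leftPerp (rightPerp C) := fun B hB P hP f => hP B hB f
  have hMW : M ∈ leftPerp (rightPerp C) :=
    ModAaux.mem_of_le (T' := ⟨_, ModAaux.isTorsionClass_leftPerp (rightPerp C)⟩)
      (ModAaux.torsGen_le hCW) hM
  exact ModAaux.id_ne_zero hnt (hMW M hMperp _)

end AuxProofs

section KAux

variable (K : Type) [Field K] {A : Type} [Ring A] [Algebra K A] [FiniteDimensional K A]

/-- The `K`-module structure on a `ModA A`, via restriction of scalars. -/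
noncomputable def ModAaux.kmod (M : ModA A) : Module K M.carrier :=
  Module.compHom M.carrier (algebraMap K Aᵐᵒᵖ)

omit [FiniteDimensional K A] in
theorem ModAaux.kmod_tower (M : ModA A) :
    letI := ModAaux.kmod K M; IsScalarTower K Aᵐᵒᵖ M.carrier := by
  letI := ModAaux.kmod K M
  refine ⟨fun k a m => ?_⟩
  show (k • a) • m = algebraMap K Aᵐᵒᵖ k • (a • m)
  rw [Algebra.smul_def, mul_smul]

theorem ModAaux.finK (M : ModA A) :
    letI := ModAaux.kmod K M; FiniteDimensional K M.carrier := by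
  letI := ModAaux.kmod K M
  haveI := ModAaux.kmod_tower K M
  haveI : Module.Finite K Aᵐᵒᵖ :=
    Module.Finite.equiv (MulOpposite.opLinearEquiv K (M := A))
  exact Module.Finite.trans Aᵐᵒᵖ M.carrier

include K in
theorem ModAaux.noeth (M : ModA A) : IsNoetherian Aᵐᵒᵖ M.carrier := by
  letI := ModAaux.kmod K M
  haveI := ModAaux.kmod_tower K M
  haveI := ModAaux.finK K M
  haveI : IsNoetherian K M.carrier := IsNoetherian.iff_fg.2 ‹_›
  exact isNoetherian_of_tower K ‹_›

/-- An `Aᵐᵒᵖ`-linear map between `ModA`s, as a `K`-linear map. -/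
noncomputable def ModAaux.toK {M N : ModA A} (f : M.carrier →ₗ[Aᵐᵒᵖ] N.carrier) :
    letI := ModAaux.kmod K M; letI := ModAaux.kmod K N; M.carrier →ₗ[K] N.carrier :=
  letI := ModAaux.kmod K M
  letI := ModAaux.kmod K N
  { toFun := f
    map_add' := f.map_add
    map_smul' := fun k m => by
      show f (algebraMap K Aᵐᵒᵖ k • m) = algebraMap K Aᵐᵒᵖ k • f m
      exact f.map_smul _ _ }

/-- The `K`-dimension of a `ModA A`. -/
noncomputable def ModAaux.mdim (M : ModA A) : ℕ :=
  letI := ModAaux.kmod K M; Module.finrank K M.carrier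

theorem ModAaux.mdim_pos {M : ModA A} (h : Nontrivial M.carrier) : 0 < ModAaux.mdim K M := by
  letI := ModAaux.kmod K M
  haveI := ModAaux.finK K M
  exact Module.finrank_pos_iff.2 h

theorem ModAaux.mdim_le_of_injective {M N : ModA A} (f : M.carrier →ₗ[Aᵐᵒᵖ] N.carrier)
    (hf : Function.Injective f) : ModAaux.mdim K M ≤ ModAaux.mdim K N := by
  letI := ModAaux.kmod K M
  letI := ModAaux.kmod K N
  haveI := ModAaux.finK K M
  haveI := ModAaux.finK K N
  exact LinearMap.finrank_le_finrank_of_injective (f := ModAaux.toK K f) hf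

theorem ModAaux.surj_of_inj_mdim {M N : ModA A} (f : M.carrier →ₗ[Aᵐᵒᵖ] N.carrier)
    (hf : Function.Injective f) (hd : ModAaux.mdim K N ≤ ModAaux.mdim K M) :
    Function.Surjective f := by
  letI := ModAaux.kmod K M
  letI := ModAaux.kmod K N
  haveI := ModAaux.finK K M
  haveI := ModAaux.finK K N
  have heq : Module.finrank K M.carrier = Module.finrank K N.carrier :=
    le_antisymm (ModAaux.mdim_le_of_injective K f hf) hd
  exact (LinearMap.injective_iff_surjective_of_finrank_eq_finrank
    (f := ModAaux.toK K f) heq).1 hf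

include K in
theorem ModAaux.inj_of_surj_endo {M : ModA A} (f : M.carrier →ₗ[Aᵐᵒᵖ] M.carrier)
    (hf : Function.Surjective f) : Function.Injective f := by
  haveI := ModAaux.noeth K (A := A) M
  exact IsNoetherian.injective_of_surjective_endomorphism f hf

/-- A submodule of a `ModA A`, as a `ModA A`. -/
noncomputable def ModAaux.subMod (M : ModA A) (S : Submodule Aᵐᵒᵖ M.carrier) : ModA A :=
  haveI := ModAaux.noeth K (A := A) M
  haveI : Module.Finite Aᵐᵒᵖ ↥S := Module.Finite.iff_fg.mpr (IsNoetherian.noetherian S)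
  ⟨↥S⟩

/-- A quotient of a `ModA A`, as a `ModA A`. -/
noncomputable def ModAaux.quotMod (M : ModA A) (S : Submodule Aᵐᵒᵖ M.carrier) : ModA A :=
  haveI : Module.Finite Aᵐᵒᵖ (M.carrier ⧸ S) :=
    Module.Finite.of_surjective S.mkQ S.mkQ_surjective
  ⟨M.carrier ⧸ S⟩

end KAux

section KAux2

variable (K : Type) [Field K] {A : Type} [Ring A] [Algebra K A] [FiniteDimensional K A]

open ModAaux

include K in
/-- Key surjectivity lemma: if `B` is a brick, `y ≤ T(B)`, `M ∈ y` and `f : M → B` is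
nonzero, then `f` is surjective and `B ∈ y`. -/
theorem ModAaux.key_surj {B M : ModA A} (hB : IsBrick B) {y : Tors A}
    (hy : y ≤ torsGen ({B} : Set (ModA A))) (hM : M ∈ y.1)
    (f : M.carrier →ₗ[Aᵐᵒᵖ] B.carrier) (hf : f ≠ 0) :
    Function.Surjective f ∧ B ∈ y.1 := by
  set S := LinearMap.range f with hS
  have hSy : subMod K B S ∈ y.1 :=
    mem_of_surj y hM f.rangeRestrict f.surjective_rangeRestrict
  have hST : subMod K B S ∈ (torsGen ({B} : Set (ModA A))).1 := hy hSy
  obtain ⟨x, hx⟩ : ∃ x, f x ≠ 0 := by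
    by_contra hc; push_neg at hc; exact hf (LinearMap.ext fun x => by simp [hc x])
  have hnt : Nontrivial (subMod K B S).carrier :=
    nontrivial_of_ne (⟨f x, LinearMap.mem_range_self f x⟩ : ↥S) 0
      (fun h => hx (congrArg Subtype.val h))
  obtain ⟨B'', hB'', g, hg⟩ := exists_nonzero_hom hST hnt
  rw [Set.mem_singleton_iff] at hB''
  subst hB''
  set ι : ↥S →ₗ[Aᵐᵒᵖ] B''.carrier := S.subtype with hι
  have hcomp : (ι ∘ₗ g) ≠ 0 := by
    intro h0
    apply hg
    ext z
    have h1 := congrArg (fun u : B''.carrier →ₗ[Aᵐᵒᵖ] B''.carrier => u z) h0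
    simp only [LinearMap.coe_comp, Function.comp_apply, LinearMap.zero_apply] at h1 ⊢
    exact Subtype.ext h1
  have hbij := hB.2 _ hcomp
  have hιs : Function.Surjective ι := by
    have hcs : Function.Surjective (⇑ι ∘ ⇑g) := hbij.surjective
    exact hcs.of_comp
  refine ⟨?_, mem_of_surj y hSy ι hιs⟩
  intro b
  obtain ⟨s, hs⟩ := hιs b
  obtain ⟨z, hz⟩ := s.2
  exact ⟨z, by rw [hz]; exact hs⟩

theorem ModAaux.sup_mem (T : Tors A) (M : ModA A) {S S' : Submodule Aᵐᵒᵖ M.carrier}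
    (hS : subMod K M S ∈ T.1) (hS' : subMod K M S' ∈ T.1) :
    subMod K M (S ⊔ S') ∈ T.1 := by
  haveI : Module.Finite Aᵐᵒᵖ ↥S := (subMod K M S).isFinite
  haveI : Module.Finite Aᵐᵒᵖ ↥S' := (subMod K M S').isFinite
  set P : ModA A := ⟨↥S × ↥S'⟩ with hP
  have hPmem : P ∈ T.1 :=
    T.2.2.2 (subMod K M S) P (subMod K M S')
      (LinearMap.inl Aᵐᵒᵖ ↥S ↥S') (LinearMap.snd Aᵐᵒᵖ ↥S ↥S')
      (LinearMap.inl_injective (R := Aᵐᵒᵖ) (M := ↥S) (M₂ := ↥S'))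
        (LinearMap.snd_surjective (R := Aᵐᵒᵖ) (M := ↥S) (M₂ := ↥S'))
      (LinearMap.range_inl Aᵐᵒᵖ ↥S ↥S') hS hS'
  set φ : (↥S × ↥S') →ₗ[Aᵐᵒᵖ] ↥(S ⊔ S') :=
    { toFun := fun p => ⟨(p.1 : M.carrier) + (p.2 : M.carrier),
        add_mem (Submodule.mem_sup_left p.1.2) (Submodule.mem_sup_right p.2.2)⟩
      map_add' := fun p q => by
        ext; simp [add_add_add_comm]
      map_smul' := fun a p => by
        ext; simp } with hφ
  have hφs : Function.Surjective φ := by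
    rintro ⟨x, hx⟩
    rcases Submodule.mem_sup.1 hx with ⟨y, hy, z, hz, rfl⟩
    exact ⟨(⟨y, hy⟩, ⟨z, hz⟩), rfl⟩
  exact mem_of_surj T hPmem φ hφs

theorem ModAaux.exists_torsionPart (T : Tors A) (M : ModA A) :
    ∃ t : Submodule Aᵐᵒᵖ M.carrier, subMod K M t ∈ T.1 ∧
      ∀ S : Submodule Aᵐᵒᵖ M.carrier, subMod K M S ∈ T.1 → S ≤ t := by
  haveI := noeth K (A := A) M
  have hbot : subMod K M (⊥ : Submodule Aᵐᵒᵖ M.carrier) ∈ T.1 := by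
    refine T.2.1 _ ?_
    exact ⟨fun a b => Subtype.ext (by
      rw [(Submodule.mem_bot _).1 a.2, (Submodule.mem_bot _).1 b.2])⟩
  obtain ⟨t, ht, hmax⟩ := set_has_maximal_iff_noetherian.mpr ‹_›
    {S : Submodule Aᵐᵒᵖ M.carrier | subMod K M S ∈ T.1} ⟨⊥, hbot⟩
  refine ⟨t, ht, fun S hS => ?_⟩
  by_contra hne
  exact hmax (S ⊔ t) (sup_mem K T M hS ht) (right_lt_sup.2 hne)

theorem ModAaux.quot_perp (T : Tors A) (M : ModA A) (t : Submodule Aᵐᵒᵖ M.carrier)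
    (ht : subMod K M t ∈ T.1)
    (hmax : ∀ S : Submodule Aᵐᵒᵖ M.carrier, subMod K M S ∈ T.1 → S ≤ t) :
    quotMod M t ∈ rightPerp T.1 := by
  intro N hN f0
  suffices h : ∀ f : N.carrier →ₗ[Aᵐᵒᵖ] (M.carrier ⧸ t), f = 0 from h f0
  intro f
  set S' : Submodule Aᵐᵒᵖ M.carrier := (LinearMap.range f).comap t.mkQ with hS'
  have htS' : t ≤ S' := by
    intro x hx
    refine Submodule.mem_comap.2 ?_
    have h0 : t.mkQ x = 0 := by
      rw [Submodule.mkQ_apply, Submodule.Quotient.mk_eq_zero]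
      exact hx
    rw [h0]
    exact zero_mem _
  have hrange : subMod K (quotMod M t) (LinearMap.range f) ∈ T.1 :=
    mem_of_surj T hN f.rangeRestrict f.surjective_rangeRestrict
  set g : ↥S' →ₗ[Aᵐᵒᵖ] ↥(LinearMap.range f) :=
    (t.mkQ.domRestrict S').codRestrict _ (fun x => Submodule.mem_comap.1 x.2) with hg
  have hgs : Function.Surjective g := by
    rintro ⟨z, hz⟩
    obtain ⟨m, hm⟩ := t.mkQ_surjective z
    refine ⟨⟨m, Submodule.mem_comap.2 (by rw [hm]; exact hz)⟩, ?_⟩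
    exact Subtype.ext (by simpa [hg] using hm)
  have hexact : LinearMap.range (Submodule.inclusion htS') = LinearMap.ker g := by
    ext x
    constructor
    · rintro ⟨w, rfl⟩
      have hw : (↑(Submodule.inclusion htS' w) : M.carrier) ∈ t := w.2
      simp only [LinearMap.mem_ker]
      refine Subtype.ext ?_
      show t.mkQ (↑(Submodule.inclusion htS' w) : M.carrier) = 0
      rw [Submodule.mkQ_apply, Submodule.Quotient.mk_eq_zero]
      exact hw
    · intro hx
      have h1 : t.mkQ (x : M.carrier) = 0 := by
        have := congrArg (fun u : ↥(LinearMap.range f) => (u : M.carrier ⧸ t))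
          (LinearMap.mem_ker.1 hx)
        simpa [hg] using this
      have h2 : (x : M.carrier) ∈ t := by
        rwa [Submodule.mkQ_apply, Submodule.Quotient.mk_eq_zero] at h1
      exact ⟨⟨(x : M.carrier), h2⟩, Subtype.ext rfl⟩
  have hS'mem : subMod K M S' ∈ T.1 :=
    T.2.2.2 (subMod K M t) (subMod K M S') (subMod K (quotMod M t) (LinearMap.range f))
      (Submodule.inclusion htS') g (Submodule.inclusion_injective htS') hgs hexact ht hrange
  have hle : S' ≤ t := hmax S' hS'mem
  ext n
  obtain ⟨m, hm⟩ := t.mkQ_surjective (f n)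
  have hmS' : m ∈ S' := Submodule.mem_comap.2 (by rw [hm]; exact LinearMap.mem_range_self f n)
  have hfn : f n = 0 := by
    rw [← hm, Submodule.mkQ_apply, Submodule.Quotient.mk_eq_zero]
    exact hle hmS'
  simpa using hfn

end KAux2

section Singleton

variable {A : Type} [Ring A]

theorem ModAaux.exists_nonzero_hom_singleton {B M : ModA A}
    (hM : M ∈ (torsGen ({B} : Set (ModA A))).1) (hnt : Nontrivial M.carrier) :
    ∃ f : B.carrier →ₗ[Aᵐᵒᵖ] M.carrier, f ≠ 0 := by
  obtain ⟨B0, hB0, f, hf⟩ := ModAaux.exists_nonzero_hom hM hnt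
  rw [Set.mem_singleton_iff] at hB0
  subst hB0
  exact ⟨f, hf⟩

end Singleton

section Main

variable (K : Type) [Field K] {A : Type} [Ring A] [Algebra K A] [FiniteDimensional K A]

open ModAaux

include K in
theorem ModAaux.part1 {B : ModA A} (hB : IsBrick B) :
    CompletelyJoinIrred (torsGen ({B} : Set (ModA A))) := by
  set T := torsGen ({B} : Set (ModA A)) with hTdef
  have hUcls : IsTorsionClass (T.1 ∩ leftPerp {B}) :=
    isTorsionClass_inter T.2 (isTorsionClass_leftPerp _)
  have hsup : sSup {y : Tors A | y < T} ≤ (⟨T.1 ∩ leftPerp {B}, hUcls⟩ : Tors A) := by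
    apply sSup_le
    intro y hy
    have hylt : y < T := hy
    intro M hM
    refine ⟨mem_of_le hylt.le hM, ?_⟩
    intro B' hB' f
    rw [Set.mem_singleton_iff] at hB'
    subst hB'
    by_contra hf
    obtain ⟨-, hmem⟩ := key_surj K hB hylt.le hM f hf
    exact hylt.not_ge (le_of_mem hmem)
  have hle : (⟨T.1 ∩ leftPerp {B}, hUcls⟩ : Tors A) ≤ T := fun M hM => hM.1
  have hne : (⟨T.1 ∩ leftPerp {B}, hUcls⟩ : Tors A) ≠ T := by
    intro h
    have hBT : B ∈ T.1 := mem_torsGen rfl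
    rw [← h] at hBT
    exact id_ne_zero hB.1 (hBT.2 B rfl LinearMap.id)
  exact lt_of_le_of_lt hsup (lt_of_le_of_ne hle hne)

include K in
theorem ModAaux.part2 {B B' : ModA A} (hB : IsBrick B) (hB' : IsBrick B') :
    torsGen ({B} : Set (ModA A)) = torsGen {B'} ↔
      Nonempty (B.carrier ≃ₗ[Aᵐᵒᵖ] B'.carrier) := by
  constructor
  · intro h
    have h1 : B' ∈ (torsGen ({B} : Set (ModA A))).1 := h ▸ mem_torsGen rfl
    obtain ⟨f, hf⟩ := exists_nonzero_hom_singleton h1 hB'.1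
    have hfs : Function.Surjective f :=
      (key_surj K hB' (le_of_eq h) (mem_torsGen rfl) f hf).1
    have h2 : B ∈ (torsGen ({B'} : Set (ModA A))).1 := h ▸ mem_torsGen rfl
    obtain ⟨g, hg⟩ := exists_nonzero_hom_singleton h2 hB.1
    have hgs : Function.Surjective g :=
      (key_surj K hB (le_of_eq h.symm) (mem_torsGen rfl) g hg).1
    have hc : Function.Surjective (f ∘ₗ g) := hfs.comp hgs
    have hinj : Function.Injective (f ∘ₗ g) := inj_of_surj_endo K _ hc
    have hginj : Function.Injective g := by
      have h3 : Function.Injective (⇑f ∘ ⇑g) := hinj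
      exact h3.of_comp
    exact ⟨(LinearEquiv.ofBijective g ⟨hginj, hgs⟩).symm⟩
  · rintro ⟨e⟩
    have hset : {T : Tors A | ({B} : Set (ModA A)) ⊆ T.1} =
        {T : Tors A | ({B'} : Set (ModA A)) ⊆ T.1} := by
      ext T
      simp only [Set.mem_setOf_eq, Set.singleton_subset_iff]
      exact ⟨fun h => mem_of_surj T h e.toLinearMap e.surjective,
             fun h => mem_of_surj T h e.symm.toLinearMap e.symm.surjective⟩
    show sInf {T : Tors A | ({B} : Set (ModA A)) ⊆ T.1} =
      sInf {T : Tors A | ({B'} : Set (ModA A)) ⊆ T.1}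
    rw [hset]

include K in
theorem ModAaux.part3 (T : Tors A) (hT : CompletelyJoinIrred T) :
    ∃ B : ModA A, IsBrick B ∧ T = torsGen {B} := by
  set U := sSup {y : Tors A | y < T} with hUdef
  have hUT : U < T := hT
  have hTU : ¬ T.1 ⊆ U.1 := fun h => hUT.ne (le_antisymm hUT.le h)
  obtain ⟨M, hMT, hMU⟩ := Set.not_subset.1 hTU
  obtain ⟨t, ht, hmax⟩ := exists_torsionPart K U M
  have hperp : quotMod M t ∈ rightPerp U.1 := quot_perp K U M t ht hmax
  have hquotT : quotMod M t ∈ T.1 := mem_of_surj T hMT t.mkQ t.mkQ_surjective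
  have hqnt : Nontrivial (quotMod M t).carrier := by
    rw [← not_subsingleton_iff_nontrivial]
    intro h
    have htt : t = ⊤ := Submodule.Quotient.subsingleton_iff.1 h
    apply hMU
    refine mem_of_surj U ht t.subtype ?_
    intro x
    exact ⟨⟨x, htt ▸ Submodule.mem_top⟩, rfl⟩
  have hq𝒮 : quotMod M t ∈
      {N : ModA A | N ∈ T.1 ∧ N ∈ rightPerp U.1 ∧ Nontrivial N.carrier} :=
    ⟨hquotT, hperp, hqnt⟩
  have hDne : (mdim K ''
      {N : ModA A | N ∈ T.1 ∧ N ∈ rightPerp U.1 ∧ Nontrivial N.carrier}).Nonempty :=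
    ⟨_, ⟨_, hq𝒮, rfl⟩⟩
  obtain ⟨B, hB𝒮, hBdim⟩ := Nat.sInf_mem hDne
  have hmin : ∀ N ∈ {N : ModA A | N ∈ T.1 ∧ N ∈ rightPerp U.1 ∧ Nontrivial N.carrier},
      mdim K B ≤ mdim K N := fun N hN => by
    rw [hBdim]; exact Nat.sInf_le ⟨N, hN, rfl⟩
  have hbrick : IsBrick B := by
    refine ⟨hB𝒮.2.2, fun f hf => ?_⟩
    obtain ⟨x, hx⟩ : ∃ x, f x ≠ 0 := by
      by_contra hc; push_neg at hc; exact hf (LinearMap.ext fun x => by simp [hc x])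
    have hnt : Nontrivial (subMod K B (LinearMap.range f)).carrier :=
      nontrivial_of_ne (⟨f x, LinearMap.mem_range_self f x⟩ : ↥(LinearMap.range f)) 0
        (fun h => hx (congrArg Subtype.val h))
    have hsub : subMod K B (LinearMap.range f) ∈
        {N : ModA A | N ∈ T.1 ∧ N ∈ rightPerp U.1 ∧ Nontrivial N.carrier} := by
      refine ⟨mem_of_surj T hB𝒮.1 f.rangeRestrict f.surjective_rangeRestrict, ?_, hnt⟩
      intro N hN g
      have h0 : (LinearMap.range f).subtype ∘ₗ g = 0 := hB𝒮.2.1 N hN _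
      ext z
      have h1 := congrArg (fun u : N.carrier →ₗ[Aᵐᵒᵖ] B.carrier => u z) h0
      exact Subtype.ext h1
    have hdle : mdim K B ≤ mdim K (subMod K B (LinearMap.range f)) := hmin _ hsub
    have hι : Function.Surjective ((LinearMap.range f).subtype) :=
      surj_of_inj_mdim K (M := subMod K B (LinearMap.range f)) (N := B)
        (LinearMap.range f).subtype (LinearMap.range f).injective_subtype hdle
    have hfs : Function.Surjective f := by
      intro b
      obtain ⟨s, hs⟩ := hι b
      obtain ⟨z, hz⟩ := s.2
      exact ⟨z, by rw [hz]; exact hs⟩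
    exact ⟨inj_of_surj_endo K f hfs, hfs⟩
  refine ⟨B, hbrick, ?_⟩
  have h1 : torsGen {B} ≤ T := le_of_mem hB𝒮.1
  have h2 : ¬ torsGen ({B} : Set (ModA A)) < T := by
    intro hlt
    have hBU : B ∈ U.1 :=
      mem_of_le (le_sSup (show torsGen ({B} : Set (ModA A)) ∈ {y : Tors A | y < T} from hlt))
        (mem_torsGen rfl)
    exact id_ne_zero hB𝒮.2.2 (hB𝒮.2.1 B hBU LinearMap.id)
  exact ((lt_or_eq_of_le h1).resolve_left h2).symm

end Main

/-- `B ↦ T(B)` induces a bijection from the set of isomorphism classes of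
bricks in `mod A` to the set of completely join irreducible elements of `tors A`. -/
theorem stmt12 (K A : Type) [Field K] [IsAlgClosed K] [Ring A] [Algebra K A]
    [FiniteDimensional K A] :
    (∀ B : ModA A, IsBrick B → CompletelyJoinIrred (torsGen ({B} : Set (ModA A)))) ∧
    (∀ B B' : ModA A, IsBrick B → IsBrick B' →
      (torsGen ({B} : Set (ModA A)) = torsGen {B'} ↔
        Nonempty (B.carrier ≃ₗ[Aᵐᵒᵖ] B'.carrier))) ∧
    (∀ T : Tors A, CompletelyJoinIrred T →
      ∃ B : ModA A, IsBrick B ∧ T = torsGen {B}) := by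
  exact ⟨fun B hB => ModAaux.part1 K hB, fun B B' hB hB' => ModAaux.part2 K hB hB',
    fun T hT => ModAaux.part3 K T hT⟩
end
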